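/- arXiv:2502.16962 — 5 statements merged into one kernel-verified Lean document; each statement's English description precedes it below -/
import Mathlib

section
/- If G is a ring of diamonds, then G admits a (1,1,1)-packing edge-coloring, i.e., a proper 3-edge-coloring. -/
open SimpleGraph

/-- For a sequence of levels `s : Fin k → ℕ`, an `S`-packing edge-coloring assigns to each
edge a color in `Fin k` so that any two distinct edges of the same color `i` are at
distance at least `s i + 1` in the line graph, i.e., every walk between them in the line
graph has length greater than `s i`. -/
def SimpleGraph.IsPackingEdgeColoring {V : Type*} (G : SimpleGraph V) {k : ℕ}
    (s : Fin k → ℕ) (c : G.edgeSet → Fin k) : Prop :=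
  ∀ e f : G.edgeSet, e ≠ f → c e = c f →
    ∀ p : G.lineGraph.Walk e f, s (c e) < p.length

/-- A graph is cubic if every vertex has degree 3. -/
def SimpleGraph.IsCubic {V : Type*} (G : SimpleGraph V) : Prop :=
  ∀ v : V, (G.neighborSet v).ncard = 3

/-- A graph is claw-free if it has no induced `K_{1,3}`. -/
def SimpleGraph.ClawFree {V : Type*} (G : SimpleGraph V) : Prop :=
  ¬ ∃ v a b c : V, G.Adj v a ∧ G.Adj v b ∧ G.Adj v c ∧
      a ≠ b ∧ a ≠ c ∧ b ≠ c ∧ ¬ G.Adj a b ∧ ¬ G.Adj a c ∧ ¬ G.Adj b c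

/-- A graph is 2-edge-connected if it is connected, has at least two vertices,
and has no bridge. -/
def SimpleGraph.TwoEdgeConnected {V : Type*} (G : SimpleGraph V) : Prop :=
  G.Connected ∧ Nontrivial V ∧ ∀ e : Sym2 V, ¬ G.IsBridge e

/-- The four vertices `x, y, z, w` induce a diamond (`K₄` minus the edge `xy`) in `G`,
with `z, w` the internal vertices. -/
def SimpleGraph.InducedDiamond {V : Type*} (G : SimpleGraph V) (x y z w : V) : Prop :=
  x ≠ y ∧ x ≠ z ∧ x ≠ w ∧ y ≠ z ∧ y ≠ w ∧ z ≠ w ∧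
    G.Adj x z ∧ G.Adj x w ∧ G.Adj y z ∧ G.Adj y w ∧ G.Adj z w ∧ ¬ G.Adj x y

/-- A ring of diamonds is a connected claw-free cubic graph in which every vertex
belongs to an induced diamond. -/
def SimpleGraph.IsRingOfDiamonds {V : Type*} (G : SimpleGraph V) : Prop :=
  G.Connected ∧ G.ClawFree ∧ G.IsCubic ∧
    ∀ v : V, ∃ x y z w : V, (v = x ∨ v = y ∨ v = z ∨ v = w) ∧ G.InducedDiamond x y z w

namespace RingOfDiamondsAux

variable {V : Type*}

/-- common neighbors -/
def cnb (G : SimpleGraph V) (u v : V) : Set V := G.neighborSet u ∩ G.neighborSet v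

lemma cnb_comm (G : SimpleGraph V) (u v : V) : cnb G u v = cnb G v u :=
  Set.inter_comm _ _

open Classical in
noncomputable def gcol (G : SimpleGraph V) (ι : V → ℕ) (u v : V) : Fin 3 :=
  if h1 : ∃ m, cnb G u v = {m} then
    if h2 : ∃ a, cnb G u h1.choose \ {v} = {a} then
      if (ι v < ι h2.choose ↔ ι u < ι h1.choose) then 0 else 1
    else if h3 : ∃ a, cnb G v h1.choose \ {u} = {a} then
      if (ι u < ι h3.choose ↔ ι v < ι h1.choose) then 0 else 1
    else 2
  else 2

lemma gcol_eq₁ (G : SimpleGraph V) (ι : V → ℕ) {u v m y' : V}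
    (hcn : cnb G u v = {m}) (hu : cnb G u m \ {v} = {y'}) :
    gcol G ι u v = if (ι v < ι y' ↔ ι u < ι m) then 0 else 1 := by
  classical
  have h1 : ∃ m', cnb G u v = {m'} := ⟨m, hcn⟩
  rw [gcol, dif_pos h1]
  have hm : h1.choose = m := by
    exact (Set.singleton_eq_singleton_iff.mp (hcn.symm.trans h1.choose_spec)).symm
  simp only [hm]
  have h2 : ∃ a, cnb G u m \ {v} = {a} := ⟨y', hu⟩
  rw [dif_pos h2]
  have hy : h2.choose = y' := by
    exact (Set.singleton_eq_singleton_iff.mp (hu.symm.trans h2.choose_spec)).symm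
  simp only [hy]

lemma gcol_eq₂ (G : SimpleGraph V) (ι : V → ℕ) {u v m y' : V}
    (hcn : cnb G u v = {m}) (hu : cnb G u m \ {v} = ∅) (hv : cnb G v m \ {u} = {y'}) :
    gcol G ι u v = if (ι u < ι y' ↔ ι v < ι m) then 0 else 1 := by
  classical
  have h1 : ∃ m', cnb G u v = {m'} := ⟨m, hcn⟩
  rw [gcol, dif_pos h1]
  have hm : h1.choose = m := by
    exact (Set.singleton_eq_singleton_iff.mp (hcn.symm.trans h1.choose_spec)).symm
  simp only [hm]
  have h2 : ¬ ∃ a, cnb G u m \ {v} = {a} := by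
    rintro ⟨a, ha⟩
    rw [hu] at ha
    exact Set.singleton_ne_empty a ha.symm
  rw [dif_neg h2]
  have h3 : ∃ a, cnb G v m \ {u} = {a} := ⟨y', hv⟩
  rw [dif_pos h3]
  have hy : h3.choose = y' := by
    exact (Set.singleton_eq_singleton_iff.mp (hv.symm.trans h3.choose_spec)).symm
  simp only [hy]

lemma gcol_eq_two_pair (G : SimpleGraph V) (ι : V → ℕ) {u v a b : V}
    (hcn : cnb G u v = {a, b}) (hab : a ≠ b) : gcol G ι u v = 2 := by
  classical
  have h1 : ¬ ∃ m, cnb G u v = {m} := by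
    rintro ⟨m, hm⟩
    rw [hcn] at hm
    have ha : a ∈ ({m} : Set V) := hm ▸ (by simp : a ∈ ({a, b} : Set V))
    have hb : b ∈ ({m} : Set V) := hm ▸ (by simp : b ∈ ({a, b} : Set V))
    simp only [Set.mem_singleton_iff] at ha hb
    exact hab (ha.trans hb.symm)
  rw [gcol, dif_neg h1]

lemma gcol_eq_two_empty (G : SimpleGraph V) (ι : V → ℕ) {u v : V}
    (hcn : cnb G u v = ∅) : gcol G ι u v = 2 := by
  classical
  have h1 : ¬ ∃ m, cnb G u v = {m} := by
    rintro ⟨m, hm⟩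
    rw [hcn] at hm
    exact Set.singleton_ne_empty m hm.symm
  rw [gcol, dif_neg h1]

noncomputable def fcol (G : SimpleGraph V) (ι : V → ℕ) (u v : V) : Fin 3 :=
  if ι u ≤ ι v then gcol G ι u v else gcol G ι v u

lemma fcol_comm (G : SimpleGraph V) {ι : V → ℕ} (hι : Function.Injective ι) (u v : V) :
    fcol G ι u v = fcol G ι v u := by
  unfold fcol
  rcases lt_trichotomy (ι u) (ι v) with h | h | h
  · rw [if_pos h.le, if_neg (not_le.mpr h)]
  · cases hι h; rfl
  · rw [if_neg (not_le.mpr h), if_pos h.le]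

lemma fcol_cycle (G : SimpleGraph V) (ι : V → ℕ) {u v m y' : V}
    (hcn : cnb G u v = {m}) (hu : cnb G u m \ {v} = ∅) (hv : cnb G v m \ {u} = {y'}) :
    fcol G ι u v = if (ι u < ι y' ↔ ι v < ι m) then 0 else 1 := by
  unfold fcol
  split
  · exact gcol_eq₂ G ι hcn hu hv
  · exact gcol_eq₁ G ι (by rw [cnb_comm]; exact hcn) hv

lemma fcol_two_pair (G : SimpleGraph V) (ι : V → ℕ) {u v a b : V}
    (hcn : cnb G u v = {a, b}) (hab : a ≠ b) : fcol G ι u v = 2 := by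
  unfold fcol
  split
  · exact gcol_eq_two_pair G ι hcn hab
  · exact gcol_eq_two_pair G ι (by rw [cnb_comm]; exact hcn) hab

lemma fcol_two_empty (G : SimpleGraph V) (ι : V → ℕ) {u v : V}
    (hcn : cnb G u v = ∅) : fcol G ι u v = 2 := by
  unfold fcol
  split
  · exact gcol_eq_two_empty G ι hcn
  · exact gcol_eq_two_empty G ι (by rw [cnb_comm]; exact hcn)

variable {G : SimpleGraph V}

lemma diamond_symmXY {x y z w : V} (hd : G.InducedDiamond x y z w) :
    G.InducedDiamond y x z w := by
  obtain ⟨h1, h2, h3, h4, h5, h6, a1, a2, a3, a4, a5, n1⟩ := hd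
  exact ⟨h1.symm, h4, h5, h2, h3, h6, a3, a4, a1, a2, a5, fun h => n1 h.symm⟩

lemma diamond_symmZW {x y z w : V} (hd : G.InducedDiamond x y z w) :
    G.InducedDiamond x y w z := by
  obtain ⟨h1, h2, h3, h4, h5, h6, a1, a2, a3, a4, a5, n1⟩ := hd
  exact ⟨h1, h3, h2, h5, h4, h6.symm, a2, a1, a4, a3, a5.symm, n1⟩

lemma nbrSet_eq [Fintype V] (hc : G.IsCubic) {v a b c : V} (h1 : G.Adj v a) (h2 : G.Adj v b)
    (h3 : G.Adj v c) (hab : a ≠ b) (hac : a ≠ c) (hbc : b ≠ c) :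
    G.neighborSet v = {a, b, c} := by
  refine (Set.eq_of_subset_of_ncard_le ?_ ?_ (Set.toFinite _)).symm
  · intro t ht
    rcases ht with rfl | rfl | rfl
    · exact h1
    · exact h2
    · exact h3
  · rw [hc v, Set.ncard_eq_three.mpr ⟨a, b, c, hab, hac, hbc, rfl⟩]

lemma exists_third [Fintype V] (hc : G.IsCubic) {x z w : V} (hxz : G.Adj x z)
    (hxw : G.Adj x w) (hzw : z ≠ w) :
    ∃ x', G.neighborSet x = {z, w, x'} ∧ G.Adj x x' ∧ x' ≠ z ∧ x' ≠ w := by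
  have hsub : ({z, w} : Set V) ⊆ G.neighborSet x := by
    intro t ht; rcases ht with rfl | rfl
    · exact hxz
    · exact hxw
  have hne : ¬ (G.neighborSet x ⊆ ({z, w} : Set V)) := by
    intro h
    have heq : G.neighborSet x = {z, w} := subset_antisymm h hsub
    have := hc x
    rw [heq, Set.ncard_pair hzw] at this
    omega
  obtain ⟨x', hx'mem, hx'notin⟩ := Set.not_subset.mp hne
  have hx'z : x' ≠ z := fun h => hx'notin (by simp [h])
  have hx'w : x' ≠ w := fun h => hx'notin (by simp [h])
  exact ⟨x', nbrSet_eq hc hxz hxw hx'mem hzw hx'z.symm hx'w.symm, hx'mem, hx'z, hx'w⟩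

section Diamond

variable [Fintype V] (hc : G.IsCubic) {x y z w x' : V} (hd : G.InducedDiamond x y z w)

include hc hd

lemma nbr_z : G.neighborSet z = {x, y, w} := by
  obtain ⟨h1, h2, h3, h4, h5, h6, a1, a2, a3, a4, a5, n1⟩ := hd
  exact nbrSet_eq hc a1.symm a3.symm a5 h1 h3 h5

lemma nbr_w : G.neighborSet w = {x, y, z} := by
  obtain ⟨h1, h2, h3, h4, h5, h6, a1, a2, a3, a4, a5, n1⟩ := hd
  exact nbrSet_eq hc a2.symm a4.symm a5.symm h1 h2 h4

lemma cnb_zw : cnb G z w = {x, y} := by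
  have hNz := nbr_z hc hd
  have hNw := nbr_w hc hd
  obtain ⟨h1, h2, h3, h4, h5, h6, a1, a2, a3, a4, a5, n1⟩ := hd
  ext t
  simp only [cnb, Set.mem_inter_iff, hNz, hNw, Set.mem_insert_iff,
    Set.mem_singleton_iff]
  constructor
  · rintro ⟨rfl | rfl | rfl, h⟩
    · exact Or.inl rfl
    · exact Or.inr rfl
    · rcases h with rfl | rfl | rfl
      · exact absurd rfl h3
      · exact absurd rfl h5
      · exact absurd rfl h6
  · rintro (rfl | rfl)
    · exact ⟨Or.inl rfl, Or.inl rfl⟩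
    · exact ⟨Or.inr (Or.inl rfl), Or.inr (Or.inl rfl)⟩

variable (hNx : G.neighborSet x = {z, w, x'}) (hx'z : x' ≠ z) (hx'w : x' ≠ w)

include hNx hx'z hx'w

lemma x'_ne_x : x' ≠ x := by
  have hmem : x' ∈ G.neighborSet x := by rw [hNx]; simp
  exact fun h => G.irrefl (h ▸ hmem)

lemma x'_ne_y : x' ≠ y := by
  obtain ⟨h1, h2, h3, h4, h5, h6, a1, a2, a3, a4, a5, n1⟩ := hd
  have hmem : G.Adj x x' := by
    have : x' ∈ G.neighborSet x := by rw [hNx]; simp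
    exact this
  exact fun h => n1 (h ▸ hmem)

lemma cnb_xz : cnb G x z = {w} := by
  have hx'x := x'_ne_x hc hd hNx hx'z hx'w
  have hx'y := x'_ne_y hc hd hNx hx'z hx'w
  have hNz := nbr_z hc hd
  obtain ⟨h1, h2, h3, h4, h5, h6, a1, a2, a3, a4, a5, n1⟩ := hd
  ext t
  simp only [cnb, Set.mem_inter_iff, hNx, hNz,
    Set.mem_insert_iff, Set.mem_singleton_iff]
  constructor
  · rintro ⟨rfl | rfl | rfl, h⟩
    · rcases h with rfl | rfl | rfl
      · exact absurd rfl h2.symm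
      · exact absurd rfl h4.symm
      · exact absurd rfl h6
    · rfl
    · rcases h with rfl | rfl | rfl
      · exact absurd rfl hx'x
      · exact absurd rfl hx'y
      · exact absurd rfl hx'w
  · rintro rfl
    exact ⟨Or.inr (Or.inl rfl), Or.inr (Or.inr rfl)⟩

lemma cnb_xw : cnb G x w = {z} := by
  have hx'x := x'_ne_x hc hd hNx hx'z hx'w
  have hx'y := x'_ne_y hc hd hNx hx'z hx'w
  have hNw := nbr_w hc hd
  obtain ⟨h1, h2, h3, h4, h5, h6, a1, a2, a3, a4, a5, n1⟩ := hd
  ext t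
  simp only [cnb, Set.mem_inter_iff, hNx, hNw,
    Set.mem_insert_iff, Set.mem_singleton_iff]
  constructor
  · rintro ⟨rfl | rfl | rfl, h⟩
    · rfl
    · rcases h with rfl | rfl | rfl
      · exact absurd rfl h3.symm
      · exact absurd rfl h5.symm
      · exact absurd rfl h6.symm
    · rcases h with rfl | rfl | rfl
      · exact absurd rfl hx'x
      · exact absurd rfl hx'y
      · exact absurd rfl hx'z
  · rintro rfl
    exact ⟨Or.inl rfl, Or.inr (Or.inr rfl)⟩

lemma cnb_xx' : cnb G x x' = ∅ := by
  have hx'x := x'_ne_x hc hd hNx hx'z hx'w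
  have hx'y := x'_ne_y hc hd hNx hx'z hx'w
  have hNz := nbr_z hc hd
  have hNw := nbr_w hc hd
  obtain ⟨h1, h2, h3, h4, h5, h6, a1, a2, a3, a4, a5, n1⟩ := hd
  ext t
  simp only [cnb, Set.mem_inter_iff, hNx, Set.mem_insert_iff, Set.mem_singleton_iff,
    Set.mem_empty_iff_false, iff_false, not_and, mem_neighborSet]
  rintro (rfl | rfl | rfl)
  · intro h
    have hmem : x' ∈ G.neighborSet t := h.symm
    rw [hNz] at hmem
    rcases hmem with rfl | rfl | rfl
    · exact hx'x rfl
    · exact hx'y rfl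
    · exact hx'w rfl
  · intro h
    have hmem : x' ∈ G.neighborSet t := h.symm
    rw [hNw] at hmem
    rcases hmem with rfl | rfl | rfl
    · exact hx'x rfl
    · exact hx'y rfl
    · exact hx'z rfl
  · exact fun h => G.irrefl h

end Diamond

section DiamondCol

variable [Fintype V] (ι : V → ℕ) (hc : G.IsCubic) {x y z w : V} (hd : G.InducedDiamond x y z w)

include hc hd

lemma fcol_zw : fcol G ι z w = 2 :=
  fcol_two_pair G ι (cnb_zw hc hd) hd.1

lemma fcol_xz :
    fcol G ι x z = if (ι x < ι y ↔ ι z < ι w) then 0 else 1 := by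
  obtain ⟨x', hNx, hadj, hx'z, hx'w⟩ := exists_third hc hd.2.2.2.2.2.2.1 hd.2.2.2.2.2.2.2.1 hd.2.2.2.2.2.1
  have h1 : cnb G x z = {w} := cnb_xz hc hd hNx hx'z hx'w
  have h2 : cnb G x w = {z} := cnb_xw hc hd hNx hx'z hx'w
  have h3 : cnb G z w = {x, y} := cnb_zw hc hd
  have hu : cnb G x w \ {z} = ∅ := by rw [h2]; simp
  have hv : cnb G z w \ {x} = {y} := by
    rw [h3, Set.insert_diff_of_mem _ (Set.mem_singleton x),
      Set.diff_singleton_eq_self (by simpa using hd.1)]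
  exact fcol_cycle G ι h1 hu hv

lemma fcol_xw :
    fcol G ι x w = if (ι x < ι y ↔ ι w < ι z) then 0 else 1 := by
  obtain ⟨x', hNx, hadj, hx'z, hx'w⟩ := exists_third hc hd.2.2.2.2.2.2.1 hd.2.2.2.2.2.2.2.1 hd.2.2.2.2.2.1
  have h1 : cnb G x w = {z} := cnb_xw hc hd hNx hx'z hx'w
  have h2 : cnb G x z = {w} := cnb_xz hc hd hNx hx'z hx'w
  have h3 : cnb G w z = {x, y} := by rw [cnb_comm]; exact cnb_zw hc hd
  have hu : cnb G x z \ {w} = ∅ := by rw [h2]; simp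
  have hv : cnb G w z \ {x} = {y} := by
    rw [h3, Set.insert_diff_of_mem _ (Set.mem_singleton x),
      Set.diff_singleton_eq_self (by simpa using hd.1)]
  exact fcol_cycle G ι h1 hu hv

lemma fcol_xthird {x' : V} (hNx : G.neighborSet x = {z, w, x'}) (hx'z : x' ≠ z)
    (hx'w : x' ≠ w) : fcol G ι x x' = 2 :=
  fcol_two_empty G ι (cnb_xx' hc hd hNx hx'z hx'w)

end DiamondCol

lemma ite_ne_two {P : Prop} [Decidable P] : (if P then (0 : Fin 3) else 1) ≠ 2 := by
  split <;> decide

lemma ite_neg_ne {P Q : Prop} [Decidable P] [Decidable Q] (h : P ↔ ¬ Q) :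
    (if P then (0 : Fin 3) else 1) ≠ (if Q then (0 : Fin 3) else 1) := by
  by_cases hq : Q
  · rw [if_pos hq, if_neg (fun hp => h.mp hp hq)]
    decide
  · rw [if_pos (h.mpr hq), if_neg hq]
    decide

-- key lemma: distinct colors around each vertex
lemma key [Fintype V] {ι : V → ℕ} (hι : Function.Injective ι) (hcubic : G.IsCubic)
    (hdia : ∀ v : V, ∃ x y z w : V, (v = x ∨ v = y ∨ v = z ∨ v = w) ∧
      G.InducedDiamond x y z w) :
    ∀ u v₁ v₂ : V, G.Adj u v₁ → G.Adj u v₂ → v₁ ≠ v₂ →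
      fcol G ι u v₁ ≠ fcol G ι u v₂ := by
  classical
  have ext_case : ∀ x y z w : V, G.InducedDiamond x y z w → ∀ v₁ v₂ : V,
      G.Adj x v₁ → G.Adj x v₂ → v₁ ≠ v₂ → fcol G ι x v₁ ≠ fcol G ι x v₂ := by
    intro x y z w hd v₁ v₂ ha1 ha2 hne
    obtain ⟨x', hNx, hadj, hx'z, hx'w⟩ := exists_third hcubic hd.2.2.2.2.2.2.1
      hd.2.2.2.2.2.2.2.1 hd.2.2.2.2.2.1
    have hA := fcol_xz ι hcubic hd
    have hB := fcol_xw ι hcubic hd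
    have hC := fcol_xthird ι hcubic hd hNx hx'z hx'w
    have hzw_ne : ι z ≠ ι w := fun h => hd.2.2.2.2.2.1 (hι h)
    have hflip : (ι z < ι w) ↔ ¬ (ι w < ι z) := by omega
    have hAB : fcol G ι x z ≠ fcol G ι x w := by
      rw [hA, hB]
      apply ite_neg_ne
      rw [hflip]
      tauto
    have hA2 : fcol G ι x z ≠ 2 := by rw [hA]; exact ite_ne_two
    have hB2 : fcol G ι x w ≠ 2 := by rw [hB]; exact ite_ne_two
    have hm1 : v₁ ∈ ({z, w, x'} : Set V) := by
      have : v₁ ∈ G.neighborSet x := ha1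
      rwa [hNx] at this
    have hm2 : v₂ ∈ ({z, w, x'} : Set V) := by
      have : v₂ ∈ G.neighborSet x := ha2
      rwa [hNx] at this
    rcases hm1 with rfl | rfl | rfl <;> rcases hm2 with rfl | rfl | rfl
    · exact absurd rfl hne
    · exact hAB
    · rw [hC]; exact hA2
    · exact hAB.symm
    · exact absurd rfl hne
    · rw [hC]; exact hB2
    · rw [hC]; exact hA2.symm
    · rw [hC]; exact hB2.symm
    · exact absurd rfl hne
  have int_case : ∀ x y z w : V, G.InducedDiamond x y z w → ∀ v₁ v₂ : V,
      G.Adj z v₁ → G.Adj z v₂ → v₁ ≠ v₂ → fcol G ι z v₁ ≠ fcol G ι z v₂ := by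
    intro x y z w hd v₁ v₂ ha1 ha2 hne
    have hA : fcol G ι z x = if (ι x < ι y ↔ ι z < ι w) then 0 else 1 :=
      (fcol_comm G hι z x).trans (fcol_xz ι hcubic hd)
    have hB : fcol G ι z y = if (ι y < ι x ↔ ι z < ι w) then 0 else 1 :=
      (fcol_comm G hι z y).trans (fcol_xz ι hcubic (diamond_symmXY hd))
    have hC : fcol G ι z w = 2 := fcol_zw ι hcubic hd
    have hxy_ne : ι x ≠ ι y := fun h => hd.1 (hι h)
    have hflip : (ι x < ι y) ↔ ¬ (ι y < ι x) := by omega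
    have hAB : fcol G ι z x ≠ fcol G ι z y := by
      rw [hA, hB]
      apply ite_neg_ne
      rw [hflip]
      tauto
    have hA2 : fcol G ι z x ≠ 2 := by rw [hA]; exact ite_ne_two
    have hB2 : fcol G ι z y ≠ 2 := by rw [hB]; exact ite_ne_two
    have hNz := nbr_z hcubic hd
    have hm1 : v₁ ∈ ({x, y, w} : Set V) := by
      have : v₁ ∈ G.neighborSet z := ha1
      rwa [hNz] at this
    have hm2 : v₂ ∈ ({x, y, w} : Set V) := by
      have : v₂ ∈ G.neighborSet z := ha2
      rwa [hNz] at this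
    rcases hm1 with rfl | rfl | rfl <;> rcases hm2 with rfl | rfl | rfl
    · exact absurd rfl hne
    · exact hAB
    · rw [hC]; exact hA2
    · exact hAB.symm
    · exact absurd rfl hne
    · rw [hC]; exact hB2
    · rw [hC]; exact hA2.symm
    · rw [hC]; exact hB2.symm
    · exact absurd rfl hne
  intro u v₁ v₂ ha1 ha2 hne
  obtain ⟨x, y, z, w, hrole, hd⟩ := hdia u
  rcases hrole with rfl | rfl | rfl | rfl
  · exact ext_case u y z w hd v₁ v₂ ha1 ha2 hne
  · exact ext_case u x z w (diamond_symmXY hd) v₁ v₂ ha1 ha2 hne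
  · exact int_case x y u w hd v₁ v₂ ha1 ha2 hne
  · exact int_case x y u z (diamond_symmZW hd) v₁ v₂ ha1 ha2 hne

end RingOfDiamondsAux

open RingOfDiamondsAux in
/-- Every ring of diamonds admits a (1,1,1)-packing edge-coloring,
that is, a proper 3-edge-coloring. -/
theorem ringOfDiamonds_packing_edge_colorable {V : Type*} [Fintype V]
    (G : SimpleGraph V) (hring : G.IsRingOfDiamonds) :
    ∃ c : G.edgeSet → Fin 3, G.IsPackingEdgeColoring ![1, 1, 1] c := by
  classical
  obtain ⟨hcon, hclaw, hcubic, hdia⟩ := hring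
  set ι : V → ℕ := fun v => ((Fintype.equivFin V) v : ℕ) with hι_def
  have hι : Function.Injective ι := fun a b hab =>
    (Fintype.equivFin V).injective (Fin.val_injective hab)
  have hsymm : ∀ u v : V, fcol G ι u v = fcol G ι v u := fcol_comm G hι
  refine ⟨fun e => Sym2.lift ⟨fcol G ι, hsymm⟩ e.val, ?_⟩
  intro e f hef hcolor p
  have hone : ∀ i : Fin 3, (![1, 1, 1] : Fin 3 → ℕ) i = 1 := by decide
  rw [hone]
  have hkey := key hι hcubic hdia
  have hnadj : ¬ G.lineGraph.Adj e f := by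
    intro hadj
    obtain ⟨hne, v, hve, hvf⟩ := lineGraph_adj_iff_exists.mp hadj
    obtain ⟨a, ha⟩ := Sym2.mem_iff_exists.mp hve
    obtain ⟨b, hb⟩ := Sym2.mem_iff_exists.mp hvf
    have hadja : G.Adj v a := by
      have hp := e.property
      rw [ha] at hp
      exact hp
    have hadjb : G.Adj v b := by
      have hp := f.property
      rw [hb] at hp
      exact hp
    have hab : a ≠ b := by
      rintro rfl
      exact hef (Subtype.ext (ha.trans hb.symm))
    apply hkey v a b hadja hadjb hab
    have hce : Sym2.lift ⟨fcol G ι, hsymm⟩ e.val = fcol G ι v a := by rw [ha]; rfl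
    have hcf : Sym2.lift ⟨fcol G ι, hsymm⟩ f.val = fcol G ι v b := by rw [hb]; rfl
    rw [← hce, ← hcf]
    exact hcolor
  cases p with
  | nil => exact absurd rfl hef
  | cons h q =>
    rw [SimpleGraph.Walk.length_cons]
    have hq : 0 < q.length := by
      rcases Nat.eq_zero_or_pos q.length with h0 | h0
      · cases q.eq_of_length_eq_zero h0
        exact absurd h hnadj
      · exact h0
    omega
end

section
/- Let G be a 2-edge-connected cubic graph whose vertex set can be partitioned into vertex-disjoint triangles (that is, there is a partition of V(G) into 3-element sets each of which induces a triangle in G). Then G admits a (1,1,1,3)-packing edge-coloring. -/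
open SimpleGraph

namespace PackingAux



variable {T : Type*} {K : SimpleGraph T}

lemma path_internal :
    ∀ {y z : T} (p : K.Walk y z), p.IsPath → ∀ w ∈ p.support, w ≠ y → w ≠ z →
      ∃ n₁ n₂, n₁ ≠ n₂ ∧ K.Adj w n₁ ∧ K.Adj w n₂ ∧ n₁ ∈ p.support ∧ n₂ ∈ p.support := by
  intro y z p
  induction p with
  | nil =>
    intro _ w hw hwy _
    simp [SimpleGraph.Walk.support_nil] at hw
    exact absurd hw hwy
  | @cons y b z h q ih =>
    intro hp w hw hwy hwz
    rw [SimpleGraph.Walk.support_cons, List.mem_cons] at hw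
    rcases hw with rfl | hw
    · exact absurd rfl hwy
    by_cases hwb : w = b
    · subst hwb
      cases q with
      | nil => exact absurd rfl hwz
      | @cons b b2 z h2 q2 =>
        obtain ⟨hq, hyq⟩ := (SimpleGraph.Walk.cons_isPath_iff _ _).mp hp
        refine ⟨y, b2, ?_, h.symm, h2, ?_, ?_⟩
        · rintro rfl
          exact hyq (by simp [SimpleGraph.Walk.support_cons,
            SimpleGraph.Walk.start_mem_support q2])
        · simp [SimpleGraph.Walk.support_cons]
        · simp [SimpleGraph.Walk.support_cons, SimpleGraph.Walk.start_mem_support q2]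
    · obtain ⟨n₁, n₂, hne, ha1, ha2, hm1, hm2⟩ := ih hp.of_cons w hw hwb hwz
      exact ⟨n₁, n₂, hne, ha1, ha2, by simp [SimpleGraph.Walk.support_cons, hm1],
        by simp [SimpleGraph.Walk.support_cons, hm2]⟩

lemma path_endpoint {y z : T} (p : K.Walk y z) (hyz : y ≠ z) :
    ∃ n, K.Adj y n ∧ n ∈ p.support := by
  cases p with
  | nil => exact absurd rfl hyz
  | @cons y b z h q =>
    exact ⟨b, h, by simp [SimpleGraph.Walk.support_cons, SimpleGraph.Walk.start_mem_support q]⟩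

lemma three_leaves
    (hdeg : ∀ t y₁ y₂ y₃, K.Adj t y₁ → K.Adj t y₂ → K.Adj t y₃ → y₁ = y₂ ∨ y₁ = y₃ ∨ y₂ = y₃)
    {x y z : T} (hxy : x ≠ y) (hxz : x ≠ z) (hyz : y ≠ z)
    (hx : ∀ y₁ y₂, K.Adj x y₁ → K.Adj x y₂ → y₁ = y₂)
    (hy : ∀ y₁ y₂, K.Adj y y₁ → K.Adj y y₂ → y₁ = y₂)
    (hz : ∀ y₁ y₂, K.Adj z y₁ → K.Adj z y₂ → y₁ = y₂)
    (hrxy : K.Reachable x y) (hrxz : K.Reachable x z) : False := by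
  classical
  obtain ⟨w0⟩ := hrxy.symm.trans hrxz
  set p : K.Walk y z := (w0.toPath : K.Path y z).val with hpdef
  have hp : p.IsPath := w0.toPath.2
  -- endpoint neighbor facts
  obtain ⟨ny, hny, hnyS⟩ := path_endpoint p hyz
  obtain ⟨nz, hnz, hnzS⟩ := path_endpoint p.reverse (Ne.symm hyz)
  have hnzS' : nz ∈ p.support := by
    rwa [SimpleGraph.Walk.support_reverse, List.mem_reverse] at hnzS
  -- x not on p
  have hxp : x ∉ p.support := by
    intro hxs
    obtain ⟨n₁, n₂, hne, ha1, ha2, _, _⟩ := path_internal p hp x hxs hxy hxz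
    exact hne (hx _ _ ha1 ha2)
  obtain ⟨q0⟩ := hrxy
  have entry : ∀ (a w : T) (q : K.Walk a w), w ∈ p.support → a ∉ p.support → False := by
    intro a w q
    induction q with
    | nil => intro hw ha; exact ha hw
    | @cons a1 b1 w1 h q' ih =>
      intro hw ha
      by_cases hb : b1 ∈ p.support
      · by_cases hby : b1 = y
        · subst hby
          have := hy a1 ny h.symm hny
          subst this
          exact ha hnyS
        by_cases hbz : b1 = z
        · subst hbz
          have := hz a1 nz h.symm hnz
          subst this
          exact ha hnzS'
        · obtain ⟨n₁, n₂, hne, ha1', ha2', hm1, hm2⟩ := path_internal p hp b1 hb hby hbz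
          rcases hdeg b1 a1 n₁ n₂ h.symm ha1' ha2' with rfl | rfl | h'
          · exact ha hm1
          · exact ha hm2
          · exact hne h'
      · exact ih hw hb
  exact entry x y q0 (SimpleGraph.Walk.start_mem_support p) hxp


section Shannon
variable {E : Type*} {T : Type*} [DecidableEq E]

/-- Properness of an edge coloring of an abstract multigraph on a finite edge set `s`. -/
def properOn (ends : E → Sym2 T) (s : Finset E) (c : E → Fin 4) : Prop :=
  ∀ e ∈ s, ∀ f ∈ s, e ≠ f → ∀ t : T, t ∈ ends e → t ∈ ends f → c e ≠ c f

lemma properOn_insert {ends : E → Sym2 T} {s : Finset E} {c : E → Fin 4}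
    (hc : properOn ends s c) {e : E} (he : e ∉ s) {α : Fin 4}
    (h : ∀ f ∈ s, ∀ t : T, t ∈ ends e → t ∈ ends f → c f ≠ α) :
    properOn ends (insert e s) (Function.update c e α) := by
  intro x hx y hy hxy t htx hty
  rcases Finset.mem_insert.mp hx with hxe | hxs
  · rcases Finset.mem_insert.mp hy with hye | hys
    · exact absurd (hxe.trans hye.symm) hxy
    · subst hxe
      rw [Function.update_self, Function.update_of_ne (by rintro rfl; exact he hys)]
      exact fun hh => (h y hys t htx hty) hh.symm
  · rcases Finset.mem_insert.mp hy with hye | hys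
    · subst hye
      rw [Function.update_self, Function.update_of_ne (by rintro rfl; exact he hxs)]
      exact h x hxs t hty htx
    · rw [Function.update_of_ne (by rintro rfl; exact he hxs),
        Function.update_of_ne (by rintro rfl; exact he hys)]
      exact hc x hxs y hys hxy t htx hty

lemma properOn_update_mem {ends : E → Sym2 T} {s : Finset E} {c : E → Fin 4}
    (hc : properOn ends s c) {g : E} {α : Fin 4}
    (h : ∀ f ∈ s, f ≠ g → ∀ t : T, t ∈ ends g → t ∈ ends f → c f ≠ α) :
    properOn ends s (Function.update c g α) := by
  intro x hx y hy hxy t htx hty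
  by_cases hxg : x = g
  · subst hxg
    rw [Function.update_self, Function.update_of_ne (fun hh => hxy hh.symm)]
    exact fun hh => (h y hy (fun hh2 => hxy hh2.symm) t htx hty) hh.symm
  · rw [Function.update_of_ne hxg]
    by_cases hyg : y = g
    · subst hyg
      rw [Function.update_self]
      exact h x hx hxg t hty htx
    · rw [Function.update_of_ne hyg]
      exact hc x hx y hy hxy t htx hty

lemma properOn_swap {ends : E → Sym2 T} {s : Finset E} {c c₁ : E → Fin 4}
    (hc : properOn ends s c) (a d : Fin 4) (R : Set E)
    (hcol : ∀ g ∈ R, c g = a ∨ c g = d)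
    (hsep : ∀ f ∈ s, f ∈ R → ∀ g ∈ s, g ∉ R → (c g = a ∨ c g = d) →
      ∀ t : T, t ∈ ends f → t ∈ ends g → False)
    (hin : ∀ g ∈ R, c₁ g = Equiv.swap a d (c g))
    (hout : ∀ g, g ∉ R → c₁ g = c g) :
    properOn ends s c₁ := by
  have hswap_mem : ∀ γ : Fin 4, (γ = a ∨ γ = d) → (Equiv.swap a d γ = a ∨ Equiv.swap a d γ = d) := by
    rintro γ (rfl | rfl)
    · rw [Equiv.swap_apply_left]; right; rfl
    · rw [Equiv.swap_apply_right]; left; rfl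
  intro x hx y hy hxy t htx hty
  by_cases hxR : x ∈ R
  · by_cases hyR : y ∈ R
    · rw [hin x hxR, hin y hyR]
      intro hh
      exact hc x hx y hy hxy t htx hty ((Equiv.swap a d).injective hh)
    · rw [hin x hxR, hout y hyR]
      intro hh
      have hcx := hswap_mem (c x) (hcol x hxR)
      rw [hh] at hcx
      exact hsep x hx hxR y hy hyR hcx t htx hty
  · by_cases hyR : y ∈ R
    · rw [hout x hxR, hin y hyR]
      intro hh
      have hcy := hswap_mem (c y) (hcol y hyR)
      rw [← hh] at hcy
      exact hsep y hy hyR x hx hxR hcy t hty htx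
    · rw [hout x hxR, hout y hyR]
      exact hc x hx y hy hxy t htx hty

end Shannon

section ShannonMain
variable {E : Type*} {T : Type*} [DecidableEq E] [DecidableEq T]

lemma sym2_eq {z : Sym2 T} {x y : T} (hx : x ∈ z) (hy : y ∈ z) (hne : x ≠ y) :
    z = s(x, y) :=
  Sym2.eq_of_ne_mem hne hx hy (Sym2.mem_mk_left x y) (Sym2.mem_mk_right x y)

lemma shannon (ends : E → Sym2 T) :
    ∀ (n : ℕ) (s : Finset E), s.card ≤ n → (∀ e ∈ s, ¬ (ends e).IsDiag) →
    (∀ t : T, (s.filter (fun g => t ∈ ends g)).card ≤ 3) →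
    ∃ c : E → Fin 4, properOn ends s c := by
  classical
  intro n
  induction n with
  | zero =>
    intro s hs _ _
    refine ⟨fun _ => 0, ?_⟩
    rw [Nat.le_zero, Finset.card_eq_zero] at hs
    subst hs
    intro e he
    simp at he
  | succ n ih =>
    intro s hcard hloop hdeg
    rcases Finset.eq_empty_or_nonempty s with rfl | hne
    · exact ⟨fun _ => 0, by intro e he; simp at he⟩
    by_cases hpar : ∃ e ∈ s, ∃ f ∈ s, e ≠ f ∧ ends e = ends f
    · -- parallel pair case
      obtain ⟨e, he, f, hf, hef, hends⟩ := hpar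
      set s' := (s.erase e).erase f with hs'def
      have hes' : e ∉ s' := by simp [hs'def]
      have hfs' : f ∉ s' := by simp [hs'def]
      have hfse : f ∈ s.erase e := Finset.mem_erase.mpr ⟨fun hh => hef hh.symm, hf⟩
      have hins : insert e (insert f s') = s := by
        rw [hs'def, Finset.insert_erase hfse, Finset.insert_erase he]
      have hsub : s' ⊆ s := (Finset.erase_subset _ _).trans (Finset.erase_subset _ _)
      have hcard' : s'.card ≤ n := by
        have h1 : (s.erase e).card ≤ n := by
          have := Finset.card_erase_of_mem he
          omega
        exact le_trans (Finset.card_le_card (Finset.erase_subset _ _)) h1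
      obtain ⟨c, hc⟩ := ih s' hcard' (fun g hg => hloop g (hsub hg))
        (fun t => le_trans (Finset.card_le_card
          (Finset.filter_subset_filter _ hsub)) (hdeg t))
      obtain ⟨⟨A, B⟩, hAB⟩ := Quot.exists_rep (ends e)
      have hABe : ends e = s(A, B) := hAB.symm
      have hABne : A ≠ B := by
        intro hh
        exact hloop e he (by rw [hABe, hh]; exact Sym2.mk_isDiag_iff.mpr rfl)
      have hAe : A ∈ ends e := by rw [hABe]; exact Sym2.mem_mk_left A B
      have hBe : B ∈ ends e := by rw [hABe]; exact Sym2.mem_mk_right A B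
      -- the union of edges at A and B in s' has at most 2 colors
      have hfiltcard : ∀ t : T, t ∈ ends e →
          (s'.filter (fun g => t ∈ ends g)).card ≤ 1 := by
        intro t hte
        have hsubf : s'.filter (fun g => t ∈ ends g) ⊆
            ((s.filter (fun g => t ∈ ends g)).erase e).erase f := by
          intro g hg
          rw [Finset.mem_filter] at hg
          refine Finset.mem_erase.mpr ⟨?_, Finset.mem_erase.mpr ⟨?_, Finset.mem_filter.mpr
            ⟨hsub hg.1, hg.2⟩⟩⟩
          · intro hh; subst hh; exact hfs' hg.1
          · intro hh; subst hh; exact hes' hg.1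
        have h1 : e ∈ s.filter (fun g => t ∈ ends g) := Finset.mem_filter.mpr ⟨he, hte⟩
        have h2 : f ∈ (s.filter (fun g => t ∈ ends g)).erase e :=
          Finset.mem_erase.mpr ⟨fun hh => hef hh.symm,
            Finset.mem_filter.mpr ⟨hf, by rw [← hends]; exact hte⟩⟩
        have := Finset.card_le_card hsubf
        rw [Finset.card_erase_of_mem h2, Finset.card_erase_of_mem h1] at this
        have h3 := hdeg t
        omega
      set used : Finset (Fin 4) :=
        ((s'.filter (fun g => A ∈ ends g)) ∪ (s'.filter (fun g => B ∈ ends g))).image c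
        with husedDef
      have husedcard : used.card ≤ 2 := by
        refine le_trans Finset.card_image_le (le_trans (Finset.card_union_le _ _) ?_)
        have := hfiltcard A hAe
        have := hfiltcard B hBe
        omega
      have hfree : 1 < ((Finset.univ : Finset (Fin 4)) \ used).card := by
        have h1 : ((Finset.univ : Finset (Fin 4)) \ used).card =
            4 - used.card := by
          rw [Finset.card_sdiff_of_subset (Finset.subset_univ _)]
          simp
        omega
      obtain ⟨α, hα, β, hβ, hαβ⟩ := Finset.one_lt_card.mp hfree
      have hαused : α ∉ used := (Finset.mem_sdiff.mp hα).2
      have hβused : β ∉ used := (Finset.mem_sdiff.mp hβ).2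
      have hmemused : ∀ g ∈ s', ∀ t : T, t ∈ ends e → t ∈ ends g → c g ∈ used := by
        intro g hg t hte htg
        rw [husedDef]
        apply Finset.mem_image_of_mem
        rw [Finset.mem_union]
        rw [hABe, Sym2.mem_iff] at hte
        rcases hte with rfl | rfl
        · exact Or.inl (Finset.mem_filter.mpr ⟨hg, htg⟩)
        · exact Or.inr (Finset.mem_filter.mpr ⟨hg, htg⟩)
      have hc1 : properOn ends (insert f s') (Function.update c f β) := by
        refine properOn_insert hc hfs' ?_
        intro g hg t htf htg
        intro hh
        rw [← hends] at htf
        exact hβused (hh ▸ hmemused g hg t htf htg)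
      have hc2 : properOn ends (insert e (insert f s'))
          (Function.update (Function.update c f β) e α) := by
        refine properOn_insert hc1 ?_ ?_
        · rw [Finset.mem_insert]
          push_neg
          exact ⟨hef, hes'⟩
        · intro g hg t hte htg
          rcases Finset.mem_insert.mp hg with rfl | hg
          · rw [Function.update_self]
            exact fun hh => hαβ (hh.symm ▸ rfl)
          · rw [Function.update_of_ne (by rintro rfl; exact hfs' hg)]
            exact fun hh => hαused (hh ▸ hmemused g hg t hte htg)
      exact ⟨_, hins ▸ hc2⟩
    · -- no parallel pair: Vizing/Shannon fan-and-chain argument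
      push_neg at hpar
      obtain ⟨e, he⟩ := hne
      set s' := s.erase e with hs'def
      have hes' : e ∉ s' := by simp [hs'def]
      have hsub : s' ⊆ s := Finset.erase_subset _ _
      have hins : insert e s' = s := Finset.insert_erase he
      have hcard' : s'.card ≤ n := by
        have h1 := Finset.card_erase_of_mem he
        have h2 : 1 ≤ s.card := Finset.card_pos.mpr ⟨e, he⟩
        rw [hs'def, h1]
        omega
      obtain ⟨c, hc⟩ := ih s' hcard' (fun g hg => hloop g (hsub hg))
        (fun t => le_trans (Finset.card_le_card
          (Finset.filter_subset_filter _ hsub)) (hdeg t))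
      obtain ⟨⟨u, v⟩, huv'⟩ := Quot.exists_rep (ends e)
      have huve : ends e = s(u, v) := huv'.symm
      have huvne : u ≠ v := fun hh =>
        hloop e he (by rw [huve, hh]; exact Sym2.mk_isDiag_iff.mpr rfl)
      have hue : u ∈ ends e := by rw [huve]; exact Sym2.mem_mk_left _ _
      have hve : v ∈ ends e := by rw [huve]; exact Sym2.mem_mk_right _ _
      have hstar : ∀ t : T, t ∈ ends e → (s'.filter (fun g => t ∈ ends g)).card ≤ 2 := by
        intro t hte
        have hsubf : s'.filter (fun g => t ∈ ends g) ⊆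
            (s.filter (fun g => t ∈ ends g)).erase e := by
          intro g hg
          rw [Finset.mem_filter] at hg
          exact Finset.mem_erase.mpr ⟨fun hh => (hh ▸ hes') hg.1,
            Finset.mem_filter.mpr ⟨hsub hg.1, hg.2⟩⟩
        have h1 : e ∈ s.filter (fun g => t ∈ ends g) := Finset.mem_filter.mpr ⟨he, hte⟩
        have h2 := Finset.card_le_card hsubf
        rw [Finset.card_erase_of_mem h1] at h2
        have h3 := hdeg t
        omega
      set miss : T → Finset (Fin 4) :=
        fun t => Finset.univ \ ((s'.filter (fun g => t ∈ ends g)).image c) with hmissdef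
      have hmiss_spec : ∀ (t : T) (γ : Fin 4),
          γ ∈ miss t ↔ ∀ g ∈ s', t ∈ ends g → c g ≠ γ := by
        intro t γ
        rw [hmissdef]
        simp only [Finset.mem_sdiff, Finset.mem_univ, true_and, Finset.mem_image,
          Finset.mem_filter, not_exists, not_and]
        constructor
        · intro h g hg htg hcg
          exact h g ⟨hg, htg⟩ hcg
        · intro h g hg
          exact h g hg.1 hg.2
      have hmiss_card : ∀ t : T, t ∈ ends e → 2 ≤ (miss t).card := by
        intro t hte
        have h1 := Finset.card_image_le (s := s'.filter (fun g => t ∈ ends g)) (f := c)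
        have h2 := hstar t hte
        rw [hmissdef]
        rw [Finset.card_sdiff_of_subset (Finset.subset_univ _)]
        simp only [Finset.card_univ, Fintype.card_fin]
        omega
      by_cases hcommon : ∃ γ : Fin 4, γ ∈ miss u ∩ miss v
      · obtain ⟨γ, hγ⟩ := hcommon
        rw [Finset.mem_inter] at hγ
        refine ⟨Function.update c e γ, hins ▸ properOn_insert hc hes' ?_⟩
        intro g hg t hte htg
        rw [huve, Sym2.mem_iff] at hte
        rcases hte with rfl | rfl
        · exact (hmiss_spec _ γ).mp hγ.1 g hg htg
        · exact (hmiss_spec _ γ).mp hγ.2 g hg htg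
      · push_neg at hcommon
        have hdisj' : ∀ γ : Fin 4, γ ∈ miss u → γ ∈ miss v → False := by
          intro γ h1 h2
          exact hcommon γ (Finset.mem_inter.mpr ⟨h1, h2⟩)
        have hdisj : miss u ∩ miss v = ∅ := by
          rw [Finset.eq_empty_iff_forall_notMem]
          exact fun γ h => hdisj' γ (Finset.mem_inter.mp h).1 (Finset.mem_inter.mp h).2
        have hunion_card : (miss u ∪ miss v).card = (miss u).card + (miss v).card := by
          have h0 := Finset.card_union_add_card_inter (miss u) (miss v)
          rw [hdisj] at h0
          simpa using h0
        have hmu2 : (miss u).card = 2 ∧ (miss v).card = 2 := by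
          have h1 := hmiss_card u hue
          have h2 := hmiss_card v hve
          have h3 : (miss u ∪ miss v).card ≤ 4 := by
            refine le_trans (Finset.card_le_card (Finset.subset_univ _)) ?_
            simp
          omega
        have huniv : miss u ∪ miss v = Finset.univ := by
          apply Finset.eq_univ_of_card
          rw [hunion_card, hmu2.1, hmu2.2]
          simp
        have hcompl : Finset.univ \ miss u = miss v := by
          ext γ
          simp only [Finset.mem_sdiff, Finset.mem_univ, true_and]
          constructor
          · intro h
            have h2 : γ ∈ miss u ∪ miss v := by rw [huniv]; exact Finset.mem_univ γ
            rw [Finset.mem_union] at h2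
            tauto
          · intro h hmu
            exact hdisj' γ hmu h
        have hcompl' : Finset.univ \ miss v = miss u := by
          ext γ
          simp only [Finset.mem_sdiff, Finset.mem_univ, true_and]
          constructor
          · intro h
            have h2 : γ ∈ miss u ∪ miss v := by rw [huniv]; exact Finset.mem_univ γ
            rw [Finset.mem_union] at h2
            tauto
          · intro h hmv
            exact hdisj' γ h hmv
        have husedu : (s'.filter (fun g => u ∈ ends g)).image c = miss v := by
          rw [← hcompl]
          rw [hmissdef]
          rw [Finset.sdiff_sdiff_self_left, Finset.univ_inter]
        have husedv : (s'.filter (fun g => v ∈ ends g)).image c = miss u := by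
          rw [← hcompl']
          rw [hmissdef]
          rw [Finset.sdiff_sdiff_self_left, Finset.univ_inter]
        obtain ⟨a, b, hab, hmissu_eq⟩ := Finset.card_eq_two.mp hmu2.1
        obtain ⟨cc, dd, hccdd, hmissv_eq⟩ := Finset.card_eq_two.mp hmu2.2
        have hamu : a ∈ miss u := by rw [hmissu_eq]; simp
        have hbmu : b ∈ miss u := by rw [hmissu_eq]; simp
        have hcmv : cc ∈ miss v := by rw [hmissv_eq]; simp
        have hdmv : dd ∈ miss v := by rw [hmissv_eq]; simp
        have hac : a ≠ cc := by rintro rfl; exact hdisj' a hamu hcmv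
        have had : a ≠ dd := by rintro rfl; exact hdisj' a hamu hdmv
        have hbc : b ≠ cc := by rintro rfl; exact hdisj' b hbmu hcmv
        have hbd : b ≠ dd := by rintro rfl; exact hdisj' b hbmu hdmv
        have hccu : cc ∈ (s'.filter (fun g => u ∈ ends g)).image c := by
          rw [husedu, hmissv_eq]; simp
        obtain ⟨g1, hg1f, hg1c⟩ := Finset.mem_image.mp hccu
        have hg1s' : g1 ∈ s' := (Finset.mem_filter.mp hg1f).1
        have hg1u : u ∈ ends g1 := (Finset.mem_filter.mp hg1f).2
        have hddu : dd ∈ (s'.filter (fun g => u ∈ ends g)).image c := by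
          rw [husedu, hmissv_eq]; simp
        obtain ⟨g2, hg2f, hg2c⟩ := Finset.mem_image.mp hddu
        have hg2s' : g2 ∈ s' := (Finset.mem_filter.mp hg2f).1
        have hg2u : u ∈ ends g2 := (Finset.mem_filter.mp hg2f).2
        have hg12 : g1 ≠ g2 := by
          rintro rfl
          exact hccdd (hg1c.symm.trans hg2c)
        have hDu : ∀ g ∈ s', u ∈ ends g → g = g1 ∨ g = g2 := by
          intro g hg hug
          by_contra hcon
          push_neg at hcon
          have hsub3 : ({g, g1, g2} : Finset E) ⊆ s'.filter (fun x => u ∈ ends x) := by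
            intro x hx
            simp only [Finset.mem_insert, Finset.mem_singleton] at hx
            rcases hx with rfl | rfl | rfl
            · exact Finset.mem_filter.mpr ⟨hg, hug⟩
            · exact hg1f
            · exact hg2f
          have hcard3 : ({g, g1, g2} : Finset E).card = 3 := by
            rw [Finset.card_insert_of_notMem (by simp [hcon.1, hcon.2]),
              Finset.card_insert_of_notMem (by simp [hg12]), Finset.card_singleton]
          have h4 := Finset.card_le_card hsub3
          have h5 := hstar u hue
          omega
        have hvcolors : ∀ f ∈ s', v ∈ ends f → c f = a ∨ c f = b := by
          intro f hf hvf
          have h1 : c f ∈ miss u := by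
            rw [← husedv]
            exact Finset.mem_image_of_mem c (Finset.mem_filter.mpr ⟨hf, hvf⟩)
          rw [hmissu_eq] at h1
          simpa using h1
        -- other endpoints of g1 and g2
        have hv1ex : ∃ v1 : T, s(u, v1) = ends g1 := ⟨Sym2.Mem.other hg1u, Sym2.other_spec hg1u⟩
        obtain ⟨v1, hv1spec⟩ := hv1ex
        have hv1mem : v1 ∈ ends g1 := by rw [← hv1spec]; exact Sym2.mem_mk_right _ _
        have hv1u : v1 ≠ u := by
          rintro rfl
          exact hloop g1 (hsub hg1s')
            (by rw [← hv1spec]; exact Sym2.mk_isDiag_iff.mpr rfl)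
        have hv1v : v1 ≠ v := by
          intro hh
          refine hpar g1 (hsub hg1s') e he (fun h2 => hes' (h2 ▸ hg1s')) ?_
          rw [← hv1spec, hh, huve]
        have hv2ex : ∃ v2 : T, s(u, v2) = ends g2 := ⟨Sym2.Mem.other hg2u, Sym2.other_spec hg2u⟩
        obtain ⟨v2, hv2spec⟩ := hv2ex
        have hv2mem : v2 ∈ ends g2 := by rw [← hv2spec]; exact Sym2.mem_mk_right _ _
        have hv2u : v2 ≠ u := by
          rintro rfl
          exact hloop g2 (hsub hg2s')
            (by rw [← hv2spec]; exact Sym2.mk_isDiag_iff.mpr rfl)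
        have hv2v : v2 ≠ v := by
          intro hh
          refine hpar g2 (hsub hg2s') e he (fun h2 => hes' (h2 ▸ hg2s')) ?_
          rw [← hv2spec, hh, huve]
        by_cases h4 : ∃ γ : Fin 4, γ ∈ miss v1 ∧ (γ = a ∨ γ = b)
        · -- recolor g1, then color e with cc
          obtain ⟨γ, hγm, hγab⟩ := h4
          have hγcc : γ ≠ cc := by rcases hγab with rfl | rfl; exacts [hac, hbc]
          have hγdd : γ ≠ dd := by rcases hγab with rfl | rfl; exacts [had, hbd]
          have hstep1 : properOn ends s' (Function.update c g1 γ) := by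
            refine properOn_update_mem hc ?_
            intro f hf hfg1 t htg1 htf
            have ht' : t = u ∨ t = v1 := by
              rw [← hv1spec, Sym2.mem_iff] at htg1
              tauto
            rcases ht' with rfl | rfl
            · rcases hDu f hf htf with rfl | rfl
              · exact absurd rfl hfg1
              · rw [hg2c]
                exact fun hh => hγdd hh.symm
            · exact (hmiss_spec _ γ).mp hγm f hf htf
          refine ⟨Function.update (Function.update c g1 γ) e cc,
            hins ▸ properOn_insert hstep1 hes' ?_⟩
          intro f hf t hte htf
          rw [huve, Sym2.mem_iff] at hte
          rcases hte with rfl | rfl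
          · rcases hDu f hf htf with rfl | rfl
            · rw [Function.update_self]
              exact hγcc
            · rw [Function.update_of_ne (fun hh => hg12 hh.symm), hg2c]
              exact hccdd.symm
          · have hfg1 : f ≠ g1 := by
              rintro rfl
              rw [← hv1spec, Sym2.mem_iff] at htf
              rcases htf with hh | hh
              · exact huvne hh.symm
              · exact hv1v hh.symm
            rw [Function.update_of_ne hfg1]
            rcases hvcolors f hf htf with h1 | h1 <;> rw [h1]
            exacts [hac, hbc]
        by_cases h5 : ∃ γ : Fin 4, γ ∈ miss v2 ∧ (γ = a ∨ γ = b)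
        · -- recolor g2, then color e with dd
          obtain ⟨γ, hγm, hγab⟩ := h5
          have hγcc : γ ≠ cc := by rcases hγab with rfl | rfl; exacts [hac, hbc]
          have hγdd : γ ≠ dd := by rcases hγab with rfl | rfl; exacts [had, hbd]
          have hstep1 : properOn ends s' (Function.update c g2 γ) := by
            refine properOn_update_mem hc ?_
            intro f hf hfg2 t htg2 htf
            have ht' : t = u ∨ t = v2 := by
              rw [← hv2spec, Sym2.mem_iff] at htg2
              tauto
            rcases ht' with rfl | rfl
            · rcases hDu f hf htf with rfl | rfl
              · rw [hg1c]
                exact fun hh => hγcc hh.symm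
              · exact absurd rfl hfg2
            · exact (hmiss_spec _ γ).mp hγm f hf htf
          refine ⟨Function.update (Function.update c g2 γ) e dd,
            hins ▸ properOn_insert hstep1 hes' ?_⟩
          intro f hf t hte htf
          rw [huve, Sym2.mem_iff] at hte
          rcases hte with rfl | rfl
          · rcases hDu f hf htf with rfl | rfl
            · rw [Function.update_of_ne hg12, hg1c]
              exact hccdd
            · rw [Function.update_self]
              exact hγdd
          · have hfg2 : f ≠ g2 := by
              rintro rfl
              rw [← hv2spec, Sym2.mem_iff] at htf
              rcases htf with hh | hh
              · exact huvne hh.symm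
              · exact hv2v hh.symm
            rw [Function.update_of_ne hfg2]
            rcases hvcolors f hf htf with h1 | h1 <;> rw [h1]
            exacts [had, hbd]
        -- Kempe chain endgame
        push_neg at h4
        have hddv1 : dd ∈ miss v1 := by
          have hne1 : (miss v1).Nonempty := by
            rw [← Finset.card_pos]
            have h1 := Finset.card_image_le (s := s'.filter (fun g => v1 ∈ ends g)) (f := c)
            have h2 : (s'.filter (fun g => v1 ∈ ends g)).card ≤ 3 :=
              le_trans (Finset.card_le_card (Finset.filter_subset_filter _ hsub)) (hdeg v1)
            rw [hmissdef, Finset.card_sdiff_of_subset (Finset.subset_univ _)]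
            simp only [Finset.card_univ, Fintype.card_fin]
            omega
          obtain ⟨γ, hγ⟩ := hne1
          have hγab := h4 γ hγ
          have hγcc : γ ≠ cc := by
            intro hγeq
            rw [hγeq] at hγ
            exact (hmiss_spec v1 cc).mp hγ g1 hg1s' hv1mem hg1c
          have hγuniv : γ ∈ miss u ∪ miss v := by rw [huniv]; exact Finset.mem_univ γ
          rw [Finset.mem_union, hmissu_eq, hmissv_eq] at hγuniv
          simp only [Finset.mem_insert, Finset.mem_singleton] at hγuniv
          have : γ = dd := by tauto
          exact this ▸ hγ
        have hv1nodd : ∀ f ∈ s', v1 ∈ ends f → c f ≠ dd := (hmiss_spec _ _).mp hddv1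
        set K : SimpleGraph T := SimpleGraph.fromRel
          (fun x y => ∃ g ∈ s', (c g = a ∨ c g = dd) ∧ ends g = s(x, y)) with hKdef
        have hKadj : ∀ g ∈ s', (c g = a ∨ c g = dd) →
            ∀ x y : T, x ∈ ends g → y ∈ ends g → x ≠ y → K.Adj x y := by
          intro g hg hcg x y hx hy hxy
          rw [hKdef, SimpleGraph.fromRel_adj]
          exact ⟨hxy, Or.inl ⟨g, hg, hcg, sym2_eq hx hy hxy⟩⟩
        have hKadj' : ∀ x y : T, K.Adj x y →
            x ≠ y ∧ ∃ g ∈ s', (c g = a ∨ c g = dd) ∧ ends g = s(x, y) := by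
          intro x y h
          rw [hKdef, SimpleGraph.fromRel_adj] at h
          refine ⟨h.1, ?_⟩
          rcases h.2 with h2 | h2
          · exact h2
          · obtain ⟨g, hg, hcg, hends2⟩ := h2
            exact ⟨g, hg, hcg, by rw [hends2, Sym2.eq_swap]⟩
        have hswap : ∀ ρ : T, ∃ c₁ : E → Fin 4, properOn ends s' c₁ ∧
            (∀ g, (g ∈ s' ∧ (c g = a ∨ c g = dd) ∧ ∃ x, x ∈ ends g ∧ K.Reachable ρ x) →
              c₁ g = Equiv.swap a dd (c g)) ∧
            (∀ g, ¬(g ∈ s' ∧ (c g = a ∨ c g = dd) ∧ ∃ x, x ∈ ends g ∧ K.Reachable ρ x) →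
              c₁ g = c g) := by
          intro ρ
          set R : Set E := {g | g ∈ s' ∧ (c g = a ∨ c g = dd) ∧
            ∃ x, x ∈ ends g ∧ K.Reachable ρ x} with hRdef
          refine ⟨fun g => if g ∈ R then Equiv.swap a dd (c g) else c g, ?_,
            fun g hg => if_pos hg, fun g hg => if_neg hg⟩
          refine properOn_swap hc a dd R (fun g hg => hg.2.1) ?_
            (fun g hg => if_pos hg) (fun g hg => if_neg hg)
          intro f hf hfR g hg hgR hcg t htf htg
          apply hgR
          refine ⟨hg, hcg, t, htg, ?_⟩
          obtain ⟨hf', hcf, x, hxf, hρx⟩ := hfR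
          by_cases hxt : x = t
          · exact hxt ▸ hρx
          · exact hρx.trans (hKadj f hf' hcf x t hxf htf hxt).reachable
        by_cases hRvu : K.Reachable v u
        · by_cases hRv1u : K.Reachable v1 u
          · -- three leaves u, v, v1 in one component: contradiction
            exfalso
            have hKdeg : ∀ t y₁ y₂ y₃, K.Adj t y₁ → K.Adj t y₂ → K.Adj t y₃ →
                y₁ = y₂ ∨ y₁ = y₃ ∨ y₂ = y₃ := by
              intro t y₁ y₂ y₃ h1 h2 h3
              by_contra hcon
              push_neg at hcon
              obtain ⟨hne12, hne13, hne23⟩ := hcon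
              obtain ⟨ht1, e1, he1, hc1', hen1⟩ := hKadj' t y₁ h1
              obtain ⟨ht2, e2, he2, hc2', hen2⟩ := hKadj' t y₂ h2
              obtain ⟨ht3, e3, he3, hc3', hen3⟩ := hKadj' t y₃ h3
              have h12 : e1 ≠ e2 := by
                rintro rfl
                rw [hen1] at hen2
                exact hne12 (Sym2.congr_right.mp hen2)
              have h13 : e1 ≠ e3 := by
                rintro rfl
                rw [hen1] at hen3
                exact hne13 (Sym2.congr_right.mp hen3)
              have h23 : e2 ≠ e3 := by
                rintro rfl
                rw [hen2] at hen3
                exact hne23 (Sym2.congr_right.mp hen3)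
              have hte1 : t ∈ ends e1 := by rw [hen1]; exact Sym2.mem_mk_left _ _
              have hte2 : t ∈ ends e2 := by rw [hen2]; exact Sym2.mem_mk_left _ _
              have hte3 : t ∈ ends e3 := by rw [hen3]; exact Sym2.mem_mk_left _ _
              have hc12 := hc e1 he1 e2 he2 h12 t hte1 hte2
              have hc13 := hc e1 he1 e3 he3 h13 t hte1 hte3
              have hc23 := hc e2 he2 e3 he3 h23 t hte2 hte3
              rcases hc1' with h1' | h1' <;> rcases hc2' with h2' | h2' <;>
                rcases hc3' with h3' | h3' <;>
                first
                  | exact hc12 (h1'.trans h2'.symm)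
                  | exact hc13 (h1'.trans h3'.symm)
                  | exact hc23 (h2'.trans h3'.symm)
            have hleafu : ∀ y₁ y₂, K.Adj u y₁ → K.Adj u y₂ → y₁ = y₂ := by
              intro y₁ y₂ h1 h2
              obtain ⟨ht1, f1, hf1, hcf1, hen1⟩ := hKadj' u y₁ h1
              obtain ⟨ht2, f2, hf2, hcf2, hen2⟩ := hKadj' u y₂ h2
              have hm1 : u ∈ ends f1 := by rw [hen1]; exact Sym2.mem_mk_left _ _
              have hm2 : u ∈ ends f2 := by rw [hen2]; exact Sym2.mem_mk_left _ _
              have hf1g2 : f1 = g2 := by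
                rcases hDu f1 hf1 hm1 with rfl | rfl
                · rcases hcf1 with h | h
                  · exact absurd (hg1c.symm.trans h).symm hac
                  · exact absurd (hg1c.symm.trans h) hccdd
                · rfl
              have hf2g2 : f2 = g2 := by
                rcases hDu f2 hf2 hm2 with rfl | rfl
                · rcases hcf2 with h | h
                  · exact absurd (hg1c.symm.trans h).symm hac
                  · exact absurd (hg1c.symm.trans h) hccdd
                · rfl
              subst hf1g2
              subst hf2g2
              rw [hen1] at hen2
              exact Sym2.congr_right.mp hen2
            have hleafv : ∀ y₁ y₂, K.Adj v y₁ → K.Adj v y₂ → y₁ = y₂ := by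
              intro y₁ y₂ h1 h2
              obtain ⟨ht1, f1, hf1, hcf1, hen1⟩ := hKadj' v y₁ h1
              obtain ⟨ht2, f2, hf2, hcf2, hen2⟩ := hKadj' v y₂ h2
              have hm1 : v ∈ ends f1 := by rw [hen1]; exact Sym2.mem_mk_left _ _
              have hm2 : v ∈ ends f2 := by rw [hen2]; exact Sym2.mem_mk_left _ _
              have hca1 : c f1 = a := by
                rcases hcf1 with h | h
                · exact h
                · rcases hvcolors f1 hf1 hm1 with h' | h'
                  · exact absurd (h.symm.trans h').symm had
                  · exact absurd (h.symm.trans h').symm hbd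
              have hca2 : c f2 = a := by
                rcases hcf2 with h | h
                · exact h
                · rcases hvcolors f2 hf2 hm2 with h' | h'
                  · exact absurd (h.symm.trans h').symm had
                  · exact absurd (h.symm.trans h').symm hbd
              have hf12 : f1 = f2 := by
                by_contra hne'
                exact hc f1 hf1 f2 hf2 hne' v hm1 hm2 (hca1.trans hca2.symm)
              subst hf12
              rw [hen1] at hen2
              exact Sym2.congr_right.mp hen2
            have hleafv1 : ∀ y₁ y₂, K.Adj v1 y₁ → K.Adj v1 y₂ → y₁ = y₂ := by
              intro y₁ y₂ h1 h2
              obtain ⟨ht1, f1, hf1, hcf1, hen1⟩ := hKadj' v1 y₁ h1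
              obtain ⟨ht2, f2, hf2, hcf2, hen2⟩ := hKadj' v1 y₂ h2
              have hm1 : v1 ∈ ends f1 := by rw [hen1]; exact Sym2.mem_mk_left _ _
              have hm2 : v1 ∈ ends f2 := by rw [hen2]; exact Sym2.mem_mk_left _ _
              have hca1 : c f1 = a := by
                rcases hcf1 with h | h
                · exact h
                · exact absurd h (hv1nodd f1 hf1 hm1)
              have hca2 : c f2 = a := by
                rcases hcf2 with h | h
                · exact h
                · exact absurd h (hv1nodd f2 hf2 hm2)
              have hf12 : f1 = f2 := by
                by_contra hne'
                exact hc f1 hf1 f2 hf2 hne' v1 hm1 hm2 (hca1.trans hca2.symm)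
              subst hf12
              rw [hen1] at hen2
              exact Sym2.congr_right.mp hen2
            exact three_leaves hKdeg huvne (fun hh => hv1u hh.symm) (fun hh => hv1v hh.symm)
              hleafu hleafv hleafv1 hRvu.symm hRv1u.symm
          · -- swap the component of v1 (which contains neither u nor v), recolor g1, color e
            have hnRv1v : ¬ K.Reachable v1 v := fun hh => hRv1u (hh.trans hRvu)
            obtain ⟨c₁, hc₁, hin, hout⟩ := hswap v1
            have huunt : ∀ f ∈ s', u ∈ ends f → c₁ f = c f ∧ (c f = cc ∨ c f = dd) := by
              intro f hf huf
              have hcf : c f = cc ∨ c f = dd := by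
                rcases hDu f hf huf with rfl | rfl
                · exact Or.inl hg1c
                · exact Or.inr hg2c
              refine ⟨hout f ?_, hcf⟩
              rintro ⟨hfs, hcol, x, hxf, hrx⟩
              have hcfdd : c f = dd := by
                rcases hcol with h1 | h1
                · rcases hcf with h2 | h2
                  · exact absurd (h1.symm.trans h2) hac
                  · exact absurd (h1.symm.trans h2) had
                · exact h1
              by_cases hxu : x = u
              · exact hRv1u (hxu ▸ hrx)
              · exact hRv1u (hrx.trans (hKadj f hfs (Or.inr hcfdd) x u hxf huf hxu).reachable)
            have hvunt : ∀ f ∈ s', v ∈ ends f → c₁ f = c f ∧ (c f = a ∨ c f = b) := by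
              intro f hf hvf
              refine ⟨hout f ?_, hvcolors f hf hvf⟩
              rintro ⟨hfs, hcol, x, hxf, hrx⟩
              by_cases hxv : x = v
              · exact hnRv1v (hxv ▸ hrx)
              · exact hnRv1v (hrx.trans (hKadj f hfs hcol x v hxf hvf hxv).reachable)
            have hafreev1 : ∀ f ∈ s', v1 ∈ ends f → c₁ f ≠ a := by
              intro f hf hvf
              by_cases hreg : (f ∈ s' ∧ (c f = a ∨ c f = dd) ∧
                  ∃ x, x ∈ ends f ∧ K.Reachable v1 x)
              · rw [hin f hreg]
                rcases hreg.2.1 with h1 | h1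
                · rw [h1, Equiv.swap_apply_left]
                  exact fun hh => had hh.symm
                · exact absurd h1 (hv1nodd f hf hvf)
              · rw [hout f hreg]
                intro hh
                exact hreg ⟨hf, Or.inl hh, v1, hvf, SimpleGraph.Reachable.refl v1⟩
            have hstep1 : properOn ends s' (Function.update c₁ g1 a) := by
              refine properOn_update_mem hc₁ ?_
              intro f hf hfg1 t htg1 htf
              have ht' : t = u ∨ t = v1 := by
                rw [← hv1spec, Sym2.mem_iff] at htg1
                tauto
              rcases ht' with rfl | rfl
              · rcases hDu f hf htf with hfe | hfe
                · exact absurd hfe hfg1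
                · rw [hfe, (huunt g2 (hfe ▸ hf) (hfe ▸ htf)).1, hg2c]
                  exact fun hh => had hh.symm
              · exact hafreev1 f hf htf
            refine ⟨Function.update (Function.update c₁ g1 a) e cc,
              hins ▸ properOn_insert hstep1 hes' ?_⟩
            intro f hf t hte htf
            rw [huve, Sym2.mem_iff] at hte
            rcases hte with rfl | rfl
            · rcases hDu f hf htf with hfe | hfe
              · rw [hfe, Function.update_self]
                exact hac
              · rw [hfe, Function.update_of_ne (fun hh => hg12 hh.symm),
                  (huunt g2 (hfe ▸ hf) (hfe ▸ htf)).1, hg2c]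
                exact hccdd.symm
            · have hfg1 : f ≠ g1 := by
                rintro rfl
                rw [← hv1spec, Sym2.mem_iff] at htf
                rcases htf with hh | hh
                · exact huvne hh.symm
                · exact hv1v hh.symm
              rw [Function.update_of_ne hfg1, (hvunt f hf htf).1]
              rcases (hvunt f hf htf).2 with h1 | h1 <;> rw [h1]
              exacts [hac, hbc]
        · -- swap the component of v (which does not contain u), color e with a
          obtain ⟨c₁, hc₁, hin, hout⟩ := hswap v
          have huunt : ∀ f ∈ s', u ∈ ends f → c₁ f = c f ∧ (c f = cc ∨ c f = dd) := by
            intro f hf huf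
            have hcf : c f = cc ∨ c f = dd := by
              rcases hDu f hf huf with rfl | rfl
              · exact Or.inl hg1c
              · exact Or.inr hg2c
            refine ⟨hout f ?_, hcf⟩
            rintro ⟨hfs, hcol, x, hxf, hrx⟩
            have hcfdd : c f = dd := by
              rcases hcol with h1 | h1
              · rcases hcf with h2 | h2
                · exact absurd (h1.symm.trans h2) hac
                · exact absurd (h1.symm.trans h2) had
              · exact h1
            by_cases hxu : x = u
            · exact hRvu (hxu ▸ hrx)
            · exact hRvu (hrx.trans (hKadj f hfs (Or.inr hcfdd) x u hxf huf hxu).reachable)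
          have hafreeu : ∀ f ∈ s', u ∈ ends f → c₁ f ≠ a := by
            intro f hf huf
            obtain ⟨h1, h2⟩ := huunt f hf huf
            rw [h1]
            rcases h2 with h2 | h2 <;> rw [h2]
            · exact fun hh => hac hh.symm
            · exact fun hh => had hh.symm
          have hafreev : ∀ f ∈ s', v ∈ ends f → c₁ f ≠ a := by
            intro f hf hvf
            by_cases hreg : (f ∈ s' ∧ (c f = a ∨ c f = dd) ∧
                ∃ x, x ∈ ends f ∧ K.Reachable v x)
            · rw [hin f hreg]
              rcases hreg.2.1 with h1 | h1
              · rw [h1, Equiv.swap_apply_left]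
                exact fun hh => had hh.symm
              · rcases hvcolors f hf hvf with h' | h'
                · exact absurd (h1.symm.trans h').symm had
                · exact absurd (h1.symm.trans h').symm hbd
            · rw [hout f hreg]
              intro hh
              exact hreg ⟨hf, Or.inl hh, v, hvf, SimpleGraph.Reachable.refl v⟩
          refine ⟨Function.update c₁ e a, hins ▸ properOn_insert hc₁ hes' ?_⟩
          intro f hf t hte htf
          rw [huve, Sym2.mem_iff] at hte
          rcases hte with rfl | rfl
          · exact hafreeu f hf htf
          · exact hafreev f hf htf


end ShannonMain




section Structure
variable {V : Type*} [Fintype V] {G : SimpleGraph V}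

lemma exists_structure (hcubic : G.IsCubic)
    (hpart : ∃ P : Set (Set V), Setoid.IsPartition P ∧
      ∀ S ∈ P, ∃ a b c : V, S = {a, b, c} ∧ a ≠ b ∧ a ≠ c ∧ b ≠ c ∧
        G.Adj a b ∧ G.Adj a c ∧ G.Adj b c) :
    ∃ (tr : V → Set V) (s₁ s₂ m : V → V),
      (∀ v, v ∈ tr v) ∧
      (∀ v w, w ∈ tr v → tr w = tr v) ∧
      (∀ v, tr v = {v, s₁ v, s₂ v}) ∧
      (∀ v, v ≠ s₁ v ∧ v ≠ s₂ v ∧ s₁ v ≠ s₂ v) ∧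
      (∀ v, G.Adj v (s₁ v) ∧ G.Adj v (s₂ v)) ∧
      (∀ v, G.Adj v (m v)) ∧
      (∀ v, m v ∉ tr v) ∧
      (∀ v, m (m v) = v) ∧
      (∀ v w, G.Adj v w → w = s₁ v ∨ w = s₂ v ∨ w = m v) := by
  classical
  obtain ⟨P, ⟨hPne, hPun⟩, htri⟩ := hpart
  have hPun' : ∀ v : V, ∃ b, (b ∈ P ∧ v ∈ b) ∧ ∀ y, (y ∈ P ∧ v ∈ y) → y = b := hPun
  choose tr htr using hPun'
  have htrP : ∀ v, tr v ∈ P := fun v => (htr v).1.1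
  have htrmem : ∀ v, v ∈ tr v := fun v => (htr v).1.2
  have htreq : ∀ v w, w ∈ tr v → tr w = tr v := by
    intro v w hw
    exact ((htr w).2 (tr v) ⟨htrP v, hw⟩).symm
  have hsib : ∀ v, ∃ x y : V, tr v = {v, x, y} ∧ v ≠ x ∧ v ≠ y ∧ x ≠ y ∧
      G.Adj v x ∧ G.Adj v y := by
    intro v
    obtain ⟨a, b, c, hS, hab, hac, hbc, hAab, hAac, hAbc⟩ := htri (tr v) (htrP v)
    have hv : v ∈ ({a, b, c} : Set V) := hS ▸ htrmem v
    simp only [Set.mem_insert_iff, Set.mem_singleton_iff] at hv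
    rcases hv with rfl | rfl | rfl
    · exact ⟨b, c, hS, hab, hac, hbc, hAab, hAac⟩
    · refine ⟨a, c, ?_, fun hh => hab hh.symm, hbc, hac, hAab.symm, hAbc⟩
      rw [hS]; ext x; simp; tauto
    · refine ⟨a, b, ?_, fun hh => hac hh.symm, fun hh => hbc hh.symm, hab,
        hAac.symm, hAbc.symm⟩
      rw [hS]; ext x; simp; tauto
  choose s₁ s₂ hsib' using hsib
  have htr_eq : ∀ v, tr v = {v, s₁ v, s₂ v} := fun v => (hsib' v).1
  have hdist : ∀ v, v ≠ s₁ v ∧ v ≠ s₂ v ∧ s₁ v ≠ s₂ v :=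
    fun v => ⟨(hsib' v).2.1, (hsib' v).2.2.1, (hsib' v).2.2.2.1⟩
  have hadjsib : ∀ v, G.Adj v (s₁ v) ∧ G.Adj v (s₂ v) :=
    fun v => ⟨(hsib' v).2.2.2.2.1, (hsib' v).2.2.2.2.2⟩
  have hm : ∀ v, ∃ z : V, G.Adj v z ∧ z ≠ s₁ v ∧ z ≠ s₂ v ∧
      (∀ w, G.Adj v w → w = s₁ v ∨ w = s₂ v ∨ w = z) := by
    intro v
    have h3 : (G.neighborSet v).ncard = 3 := hcubic v
    have hsubN : ({s₁ v, s₂ v} : Set V) ⊆ G.neighborSet v := by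
      intro x hx
      rcases hx with rfl | hx
      · exact (hadjsib v).1
      · rw [Set.mem_singleton_iff] at hx
        subst hx
        exact (hadjsib v).2
    have hset : ((G.neighborSet v) \ {s₁ v, s₂ v}).ncard = 1 := by
      rw [Set.ncard_diff hsubN (Set.toFinite _), Set.ncard_pair (hdist v).2.2, h3]
    obtain ⟨z, hz⟩ := Set.ncard_eq_one.mp hset
    have hzmem : z ∈ (G.neighborSet v) \ {s₁ v, s₂ v} := by rw [hz]; rfl
    refine ⟨z, hzmem.1, ?_, ?_, ?_⟩
    · intro hh
      exact hzmem.2 (by rw [hh]; exact Set.mem_insert _ _)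
    · intro hh
      exact hzmem.2 (by rw [hh]; exact Set.mem_insert_iff.mpr (Or.inr rfl))
    · intro w hw
      by_cases h1 : w = s₁ v
      · exact Or.inl h1
      by_cases h2 : w = s₂ v
      · exact Or.inr (Or.inl h2)
      · right; right
        have : w ∈ (G.neighborSet v) \ {s₁ v, s₂ v} := by
          refine ⟨hw, ?_⟩
          intro hmem
          rcases hmem with h | h
          · exact h1 h
          · exact h2 h
        rw [hz] at this
        exact this
  choose m hm' using hm
  have hmadj : ∀ v, G.Adj v (m v) := fun v => (hm' v).1
  have hmtr : ∀ v, m v ∉ tr v := by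
    intro v hmem
    rw [htr_eq v] at hmem
    rcases hmem with h | h | h
    · have hvv := hmadj v
      rw [h] at hvv
      exact G.loopless.irrefl v hvv
    · exact (hm' v).2.1 h
    · exact (hm' v).2.2.1 h
  have hminv : ∀ v, m (m v) = v := by
    intro v
    have hadj : G.Adj (m v) v := (hmadj v).symm
    rcases (hm' (m v)).2.2.2 v hadj with h | h | h
    · exfalso
      have hv_in : v ∈ tr (m v) := by
        rw [htr_eq (m v)]
        right; left; exact h
      have hteq := htreq (m v) v hv_in
      exact hmtr v (by rw [hteq]; exact htrmem (m v))
    · exfalso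
      have hv_in : v ∈ tr (m v) := by
        rw [htr_eq (m v)]
        right; right; exact h
      have hteq := htreq (m v) v hv_in
      exact hmtr v (by rw [hteq]; exact htrmem (m v))
    · exact h.symm
  exact ⟨tr, s₁, s₂, m, htrmem, htreq, htr_eq, hdist, hadjsib, hmadj, hmtr, hminv,
    fun v w hw => (hm' v).2.2.2 w hw⟩

end Structure

/-- pick the smallest color of `{0,1,2}` different from both arguments -/
def miss3 (α β : Fin 4) : Fin 4 :=
  if 0 ≠ α ∧ 0 ≠ β then 0 else if 1 ≠ α ∧ 1 ≠ β then 1 else 2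

lemma miss3_comm : ∀ α β : Fin 4, miss3 α β = miss3 β α := by decide

lemma miss3_spec : ∀ α β : Fin 4, α ≠ β →
    miss3 α β ≠ α ∧ miss3 α β ≠ β ∧ miss3 α β ≠ 3 := by decide


end PackingAux

/-- If `G` is a 2-edge-connected cubic graph whose vertex set can be partitioned into
vertex-disjoint triangles, then `G` admits a (1,1,1,3)-packing edge-coloring. -/
theorem triangle_partition_packing_edge_colorable {V : Type*} [Fintype V]
    (G : SimpleGraph V) (h2ec : G.TwoEdgeConnected) (hcubic : G.IsCubic)
    (hpart : ∃ P : Set (Set V), Setoid.IsPartition P ∧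
      ∀ S ∈ P, ∃ a b c : V, S = {a, b, c} ∧ a ≠ b ∧ a ≠ c ∧ b ≠ c ∧
        G.Adj a b ∧ G.Adj a c ∧ G.Adj b c) :
    ∃ col : G.edgeSet → Fin 4, G.IsPackingEdgeColoring ![1, 1, 1, 3] col := by
  classical
  obtain ⟨tr, s₁, s₂, m, htrmem, htreq, htr_eq, hdist, hadjsib, hmadj, hmtr, hminv, hnbr⟩ :=
    PackingAux.exists_structure hcubic hpart
  clear h2ec hcubic hpart
  -- membership in triangles
  have hmem_tr : ∀ v x, x ∈ tr v ↔ (x = v ∨ x = s₁ v ∨ x = s₂ v) := by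
    intro v x
    rw [htr_eq v]
    simp
  have htr_ne : ∀ v, tr (m v) ≠ tr v := by
    intro v hh
    exact hmtr v (hh ▸ htrmem (m v))
  -- the quotient multigraph: external edges with their triangles as "ends"
  set ends : Sym2 V → Sym2 (Set V) := Sym2.map tr with hendsdef
  set sF : Finset (Sym2 V) := Finset.univ.image (fun v : V => s(v, m v)) with hsFdef
  have hmemsF : ∀ v : V, s(v, m v) ∈ sF := by
    intro v
    rw [hsFdef]
    exact Finset.mem_image_of_mem _ (Finset.mem_univ v)
  have hsF_mem : ∀ p ∈ sF, ∃ v : V, p = s(v, m v) := by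
    intro p hp
    rw [hsFdef] at hp
    obtain ⟨v, _, hv⟩ := Finset.mem_image.mp hp
    exact ⟨v, hv.symm⟩
  have hloopF : ∀ p ∈ sF, ¬ (ends p).IsDiag := by
    intro p hp
    obtain ⟨v, rfl⟩ := hsF_mem p hp
    rw [hendsdef]
    simp only [Sym2.map_pair_eq, Sym2.mk_isDiag_iff]
    exact fun hh => htr_ne v hh.symm
  have hdegF : ∀ Ts : Set V, (sF.filter (fun p => Ts ∈ ends p)).card ≤ 3 := by
    intro Ts
    rcases Finset.eq_empty_or_nonempty (sF.filter (fun p => Ts ∈ ends p)) with hemp | hne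
    · rw [hemp]; simp
    obtain ⟨p0, hp0⟩ := hne
    rw [Finset.mem_filter] at hp0
    obtain ⟨v0', hv0'⟩ := hsF_mem p0 hp0.1
    have hp0m : Ts ∈ ends p0 := hp0.2
    rw [hv0', hendsdef] at hp0m
    simp only [Sym2.map_pair_eq, Sym2.mem_iff] at hp0m
    obtain ⟨v0, hv0⟩ : ∃ v0 : V, tr v0 = Ts := by
      rcases hp0m with h | h
      · exact ⟨v0', h.symm⟩
      · exact ⟨m v0', h.symm⟩
    have hsubset : sF.filter (fun p => Ts ∈ ends p) ⊆
        {s(v0, m v0), s(s₁ v0, m (s₁ v0)), s(s₂ v0, m (s₂ v0))} := by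
      intro p hp
      rw [Finset.mem_filter] at hp
      obtain ⟨w, rfl⟩ := hsF_mem p hp.1
      have hm2 : Ts ∈ ends s(w, m w) := hp.2
      rw [hendsdef] at hm2
      simp only [Sym2.map_pair_eq, Sym2.mem_iff] at hm2
      obtain ⟨w', hpw', htrw'⟩ : ∃ w', s(w, m w) = s(w', m w') ∧ tr w' = Ts := by
        rcases hm2 with h | h
        · exact ⟨w, rfl, h.symm⟩
        · exact ⟨m w, by rw [hminv w, Sym2.eq_swap], h.symm⟩
      have hw'mem : w' ∈ tr v0 := by
        rw [hv0, ← htrw']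
        exact htrmem w'
      rw [hmem_tr] at hw'mem
      rw [hpw']
      rcases hw'mem with rfl | rfl | rfl
      · exact Finset.mem_insert_self _ _
      · exact Finset.mem_insert.mpr (Or.inr (Finset.mem_insert_self _ _))
      · exact Finset.mem_insert.mpr (Or.inr (Finset.mem_insert.mpr (Or.inr (Finset.mem_singleton_self _))))
    refine le_trans (Finset.card_le_card hsubset) ?_
    refine le_trans (Finset.card_insert_le _ _) ?_
    have h2 := Finset.card_insert_le (s(s₁ v0, m (s₁ v0)))
      ({s(s₂ v0, m (s₂ v0))} : Finset (Sym2 V))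
    have h3 : ({s(s₂ v0, m (s₂ v0))} : Finset (Sym2 V)).card = 1 := Finset.card_singleton _
    omega
  obtain ⟨κ', hκ'⟩ := PackingAux.shannon ends sF.card sF le_rfl hloopF hdegF
  set κ : V → Fin 4 := fun v => κ' s(v, m v) with hκdef
  have hκm : ∀ v, κ (m v) = κ v := by
    intro v
    rw [hκdef]
    simp only []
    rw [hminv v, Sym2.eq_swap]
  have hκinj : ∀ v w, tr w = tr v → w ≠ v → κ w ≠ κ v := by
    intro v w htw hwv
    have hne : s(w, m w) ≠ s(v, m v) := by
      intro hh
      rw [Sym2.eq_iff] at hh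
      rcases hh with ⟨h1, h2⟩ | ⟨h1, h2⟩
      · exact hwv h1
      · exact hmtr v (h1 ▸ (htw ▸ htrmem w))
    have hmem1 : tr v ∈ ends s(w, m w) := by
      rw [hendsdef]
      simp only [Sym2.map_pair_eq, Sym2.mem_iff]
      exact Or.inl htw.symm
    have hmem2 : tr v ∈ ends s(v, m v) := by
      rw [hendsdef]
      simp only [Sym2.map_pair_eq]
      exact Sym2.mem_mk_left _ _
    exact hκ' s(w, m w) (hmemsF w) s(v, m v) (hmemsF v) hne (tr v) hmem1 hmem2
  have hκtri : ∀ v, κ (s₁ v) ≠ κ v ∧ κ (s₂ v) ≠ κ v ∧ κ (s₁ v) ≠ κ (s₂ v) := by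
    intro v
    have h1 : tr (s₁ v) = tr v := htreq v (s₁ v) (by rw [hmem_tr]; tauto)
    have h2 : tr (s₂ v) = tr v := htreq v (s₂ v) (by rw [hmem_tr]; tauto)
    refine ⟨hκinj v (s₁ v) h1 (fun hh => (hdist v).1 hh.symm),
      hκinj v (s₂ v) h2 (fun hh => (hdist v).2.1 hh.symm), ?_⟩
    have h3 : tr (s₁ v) = tr (s₂ v) := by rw [h1, h2]
    exact hκinj (s₂ v) (s₁ v) h3 (hdist v).2.2
  -- local coloring functions
  set third : V → V → V := fun u w => if w = s₁ u then s₂ u else s₁ u with hthdef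
  set tcol : V → V → Fin 4 := fun u w =>
    if κ (third u w) ≠ 3 then κ (third u w) else PackingAux.miss3 (κ u) (κ w) with htcdef
  set fcol : V → V → Fin 4 := fun u w => if w = m u then κ u else tcol u w with hfdef
  have hm_ne_sib : ∀ v, m v ≠ s₁ v ∧ m v ≠ s₂ v := by
    intro v
    constructor <;> intro hh <;> apply hmtr v <;> rw [hmem_tr] <;> tauto
  have hthird_s1 : ∀ v, third v (s₁ v) = s₂ v := by
    intro v
    rw [hthdef]
    exact if_pos rfl
  have hthird_s2 : ∀ v, third v (s₂ v) = s₁ v := by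
    intro v
    have h : ¬ (s₂ v = s₁ v) := fun hh => (hdist v).2.2 hh.symm
    rw [hthdef]
    exact if_neg h
  have hthird_ne : ∀ v w, third v w ≠ v ∧ third v w ≠ w ∧ third v w ∈ tr v := by
    intro v w
    by_cases h : w = s₁ v
    · have he : third v w = s₂ v := by rw [hthdef]; exact if_pos h
      rw [he]
      refine ⟨fun hh => (hdist v).2.1 hh.symm, ?_, by rw [hmem_tr]; tauto⟩
      rw [h]
      exact fun hh => (hdist v).2.2 hh.symm
    · have he : third v w = s₁ v := by rw [hthdef]; exact if_neg h
      rw [he]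
      exact ⟨fun hh => (hdist v).1 hh.symm, fun hh => h hh.symm, by rw [hmem_tr]; tauto⟩
  have huniq3 : ∀ v w x y, w ∈ tr v → w ≠ v → x ∈ tr v → y ∈ tr v →
      x ≠ v → y ≠ v → x ≠ w → y ≠ w → x = y := by
    intro v w x y hw hwv hx hy hxv hyv hxw hyw
    rw [hmem_tr] at hw hx hy
    rcases hw with rfl | rfl | rfl
    · exact absurd rfl hwv
    · rcases hx with h | h | h <;> rcases hy with h' | h' | h' <;>
        first
          | (exact absurd h hxv)
          | (exact absurd h' hyv)
          | (exact absurd h hxw)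
          | (exact absurd h' hyw)
          | (exact h.trans h'.symm)
    · rcases hx with h | h | h <;> rcases hy with h' | h' | h' <;>
        first
          | (exact absurd h hxv)
          | (exact absurd h' hyv)
          | (exact absurd h hxw)
          | (exact absurd h' hyw)
          | (exact h.trans h'.symm)
  have hthird_symm : ∀ v w, (w = s₁ v ∨ w = s₂ v) → third w v = third v w := by
    intro v w hw
    have hwtr : w ∈ tr v := by rw [hmem_tr]; tauto
    have hwv : w ≠ v := by
      rcases hw with rfl | rfl
      · exact fun hh => (hdist v).1 hh.symm
      · exact fun hh => (hdist v).2.1 hh.symm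
    have htrw : tr w = tr v := htreq v w hwtr
    have h1 := hthird_ne w v
    have h2 := hthird_ne v w
    exact huniq3 v w (third w v) (third v w) hwtr hwv (htrw ▸ h1.2.2) h2.2.2
      h1.2.1 h2.1 h1.1 h2.2.1
  have hfm : ∀ x, fcol x (m x) = κ x := by
    intro x
    rw [hfdef]
    exact if_pos rfl
  have hf1 : ∀ u, fcol u (s₁ u) =
      (if κ (s₂ u) ≠ 3 then κ (s₂ u) else PackingAux.miss3 (κ u) (κ (s₁ u))) := by
    intro u
    have h : ¬ (s₁ u = m u) := fun hh => (hm_ne_sib u).1 hh.symm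
    have h2 : fcol u (s₁ u) = tcol u (s₁ u) := by rw [hfdef]; exact if_neg h
    rw [h2, htcdef]
    simp only [hthird_s1]
  have hf2 : ∀ u, fcol u (s₂ u) =
      (if κ (s₁ u) ≠ 3 then κ (s₁ u) else PackingAux.miss3 (κ u) (κ (s₂ u))) := by
    intro u
    have h : ¬ (s₂ u = m u) := fun hh => (hm_ne_sib u).2 hh.symm
    have h2 : fcol u (s₂ u) = tcol u (s₂ u) := by rw [hfdef]; exact if_neg h
    rw [h2, htcdef]
    simp only [hthird_s2]
  -- the three colors at a vertex are distinct, and sibling edges avoid color 3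
  have hats : ∀ u : V, (fcol u (s₁ u) ≠ 3 ∧ fcol u (s₂ u) ≠ 3) ∧
      fcol u (s₁ u) ≠ fcol u (s₂ u) ∧ fcol u (s₁ u) ≠ κ u ∧ fcol u (s₂ u) ≠ κ u := by
    intro u
    obtain ⟨hβα, hγα, hβγ⟩ := hκtri u
    rw [hf1, hf2]
    by_cases hγ : κ (s₂ u) = 3
    · have hβ : κ (s₁ u) ≠ 3 := fun hh => hβγ (hh.trans hγ.symm)
      rw [if_neg (fun hh => hh hγ), if_pos hβ]
      obtain ⟨hm1, hm2, hm3⟩ := PackingAux.miss3_spec (κ u) (κ (s₁ u)) (fun hh => hβα hh.symm)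
      exact ⟨⟨hm3, hβ⟩, hm2, hm1, hβα⟩
    · rw [if_pos hγ]
      by_cases hβ : κ (s₁ u) = 3
      · rw [if_neg (fun hh => hh hβ)]
        obtain ⟨hm1, hm2, hm3⟩ := PackingAux.miss3_spec (κ u) (κ (s₂ u)) (fun hh => hγα hh.symm)
        exact ⟨⟨hγ, hm3⟩, fun hh => hm2 hh.symm, hγα, hm1⟩
      · rw [if_pos hβ]
        exact ⟨⟨hγ, hβ⟩, fun hh => hβγ hh.symm, hγα, hβα⟩
  -- symmetry of fcol on adjacent pairs
  have hfsymm : ∀ u w, G.Adj u w → fcol u w = fcol w u := by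
    intro u w hadj
    by_cases h1 : w = m u
    · have h1' : u = m w := by rw [h1, hminv]
      have e1 : fcol u w = κ u := by rw [hfdef]; exact if_pos h1
      have e2 : fcol w u = κ w := by rw [hfdef]; exact if_pos h1'
      rw [e1, e2, h1, hκm u]
    · have h2 : ¬ (u = m w) := fun hh => h1 (by rw [hh, hminv])
      have e1 : fcol u w = tcol u w := by rw [hfdef]; exact if_neg h1
      have e2 : fcol w u = tcol w u := by rw [hfdef]; exact if_neg h2
      have hsibw : w = s₁ u ∨ w = s₂ u := by
        rcases hnbr u w hadj with h | h | h
        · exact Or.inl h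
        · exact Or.inr h
        · exact absurd h h1
      rw [e1, e2, htcdef]
      simp only [hthird_symm u w hsibw, PackingAux.miss3_comm (κ w) (κ u)]
  -- the edge coloring
  have hedge_repr : ∀ e : G.edgeSet, ∃ p : V × V, (e : Sym2 V) = s(p.1, p.2) := by
    intro e
    obtain ⟨⟨x, y⟩, hxy⟩ := Quot.exists_rep (e : Sym2 V)
    exact ⟨(x, y), hxy.symm⟩
  choose rep hrep using hedge_repr
  set col : G.edgeSet → Fin 4 := fun e => fcol (rep e).1 (rep e).2 with hcoldef
  have hcol_val : ∀ (e : G.edgeSet) (u w : V), (e : Sym2 V) = s(u, w) → col e = fcol u w := by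
    intro e u w hval
    have hadj : G.Adj u w := by
      rw [← SimpleGraph.mem_edgeSet, ← hval]
      exact e.2
    have hr := hrep e
    rw [hval] at hr
    rw [Sym2.eq_iff] at hr
    rw [hcoldef]
    simp only []
    rcases hr with ⟨h1, h2⟩ | ⟨h1, h2⟩
    · rw [← h1, ← h2]
    · rw [← h1, ← h2]
      exact (hfsymm u w hadj).symm
  -- classification of the edges through a vertex
  have hedges_at : ∀ (x : V) (e : G.edgeSet), x ∈ (e : Sym2 V) →
      (e : Sym2 V) = s(x, s₁ x) ∨ (e : Sym2 V) = s(x, s₂ x) ∨ (e : Sym2 V) = s(x, m x) := by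
    intro x e hx
    have hs := Sym2.other_spec hx
    have hadj : G.Adj x (Sym2.Mem.other hx) := by
      rw [← SimpleGraph.mem_edgeSet, hs]
      exact e.2
    rcases hnbr x _ hadj with h | h | h
    · left; rw [← hs, h]
    · right; left; rw [← hs, h]
    · right; right; rw [← hs, h]
  -- properness at a vertex
  have hproper : ∀ (e f : G.edgeSet) (x : V), x ∈ (e : Sym2 V) → x ∈ (f : Sym2 V) →
      e ≠ f → col e ≠ col f := by
    intro e f x hxe hxf hef
    have hvals : (e : Sym2 V) ≠ (f : Sym2 V) := fun hh => hef (Subtype.ext hh)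
    obtain ⟨⟨hn1, hn2⟩, hd12, hd1m, hd2m⟩ := hats x
    rcases hedges_at x e hxe with he1 | he1 | he1 <;>
      rcases hedges_at x f hxf with hf1 | hf1 | hf1
    · exact absurd (he1.trans hf1.symm) hvals
    · rw [hcol_val e x (s₁ x) he1, hcol_val f x (s₂ x) hf1]; exact hd12
    · rw [hcol_val e x (s₁ x) he1, hcol_val f x (m x) hf1, hfm]; exact hd1m
    · rw [hcol_val e x (s₂ x) he1, hcol_val f x (s₁ x) hf1]
      exact fun hh => hd12 hh.symm
    · exact absurd (he1.trans hf1.symm) hvals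
    · rw [hcol_val e x (s₂ x) he1, hcol_val f x (m x) hf1, hfm]; exact hd2m
    · rw [hcol_val e x (m x) he1, hcol_val f x (s₁ x) hf1, hfm]
      exact fun hh => hd1m hh.symm
    · rw [hcol_val e x (m x) he1, hcol_val f x (s₂ x) hf1, hfm]
      exact fun hh => hd2m hh.symm
    · exact absurd (he1.trans hf1.symm) hvals
  -- edges of color 3 are external with both endpoint-labels 3
  have hcol3 : ∀ e : G.edgeSet, col e = 3 → ∃ u : V, (e : Sym2 V) = s(u, m u) ∧ κ u = 3 := by
    intro e h3
    obtain ⟨⟨x, y⟩, hxy⟩ := Quot.exists_rep (e : Sym2 V)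
    have hval : (e : Sym2 V) = s(x, y) := hxy.symm
    have hadj : G.Adj x y := by
      rw [← SimpleGraph.mem_edgeSet, ← hval]
      exact e.2
    rcases hnbr x y hadj with h | h | h
    · exfalso
      rw [h] at hval
      rw [hcol_val e x (s₁ x) hval] at h3
      exact ((hats x).1.1) h3
    · exfalso
      rw [h] at hval
      rw [hcol_val e x (s₂ x) hval] at h3
      exact ((hats x).1.2) h3
    · rw [h] at hval
      refine ⟨x, hval, ?_⟩
      rw [hcol_val e x (m x) hval, hfm] at h3
      exact h3
  -- final: verify the packing property
  refine ⟨col, ?_⟩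
  intro e f hne hcc p
  have hmat : ∀ i : Fin 4, (![1, 1, 1, 3] : Fin 4 → ℕ) i = if i = 3 then 3 else 1 := by decide
  by_cases h3 : col e = 3
  · -- the distance-at-least-4 class
    rw [hmat, if_pos h3]
    have h3f : col f = 3 := hcc ▸ h3
    obtain ⟨u, heval, hκu⟩ := hcol3 e h3
    obtain ⟨u', hfval, hκu'⟩ := hcol3 f h3f
    have hκmu : κ (m u) = 3 := by rw [hκm]; exact hκu
    have hκmu' : κ (m u') = 3 := by rw [hκm]; exact hκu'
    -- no endpoint of f lies in the two triangles of e
    have hfA : ∀ x : V, (x ∈ tr u ∨ x ∈ tr (m u)) → x ∉ (f : Sym2 V) := by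
      intro x hx hxf
      have hκx : κ x = 3 := by
        rw [hfval, Sym2.mem_iff] at hxf
        rcases hxf with rfl | rfl
        · exact hκu'
        · exact hκmu'
      have hfe : (f : Sym2 V) = (e : Sym2 V) := by
        rcases hx with hx | hx
        · have hxu : x = u := by
            by_contra hne'
            exact hκinj u x (htreq u x hx) hne' (by rw [hκx, hκu])
          subst hxu
          rw [hfval, Sym2.mem_iff] at hxf
          rcases hxf with rfl | hh
          · rw [hfval, heval]
          · rw [hfval, heval, hh, hminv, Sym2.eq_swap]
        · have hxu : x = m u := by
            by_contra hne'
            exact hκinj (m u) x (htreq (m u) x hx) hne' (by rw [hκx, hκmu])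
          subst hxu
          rw [hfval, Sym2.mem_iff] at hxf
          rcases hxf with rfl | hh
          · rw [hfval, heval, hminv, Sym2.eq_swap]
          · have huu : u' = u := by
              have h9 := congrArg m hh
              rw [hminv, hminv] at h9
              exact h9.symm
            rw [hfval, heval, huu]
      exact hne (Subtype.ext hfe.symm)
    -- neighbors of e in the line graph live inside the two triangles of e
    have hC1 : ∀ g : G.edgeSet, G.lineGraph.Adj e g →
        ∀ x ∈ (g : Sym2 V), x ∈ tr u ∨ x ∈ tr (m u) := by
      intro g hadj
      obtain ⟨hne', y, hye, hyg⟩ := SimpleGraph.lineGraph_adj_iff_exists.mp hadj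
      have hy' : y = u ∨ y = m u := by
        rw [heval, Sym2.mem_iff] at hye
        exact hye
      -- g is a triangle edge at y
      have hs := Sym2.other_spec hyg
      have hadjy : G.Adj y (Sym2.Mem.other hyg) := by
        rw [← SimpleGraph.mem_edgeSet, hs]
        exact g.2
      have hz : Sym2.Mem.other hyg = s₁ y ∨ Sym2.Mem.other hyg = s₂ y := by
        rcases hnbr y _ hadjy with h | h | h
        · exact Or.inl h
        · exact Or.inr h
        · exfalso
          apply hne'
          apply Subtype.ext
          rw [← hs, h]
          rcases hy' with rfl | rfl
          · exact heval
          · rw [heval, hminv, Sym2.eq_swap]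
      have hgy : (g : Sym2 V) = s(y, Sym2.Mem.other hyg) := hs.symm
      intro x hxg
      rw [hgy, Sym2.mem_iff] at hxg
      have hxtr : x ∈ tr y := by
        rw [hmem_tr]
        rcases hxg with rfl | rfl
        · exact Or.inl rfl
        · rcases hz with h | h
          · exact Or.inr (Or.inl h)
          · exact Or.inr (Or.inr h)
      rcases hy' with rfl | rfl
      · exact Or.inl hxtr
      · exact Or.inr hxtr
    -- an edge with an endpoint in the triangles of e cannot be adjacent to f
    have hC3 : ∀ g : G.edgeSet, (∃ w, w ∈ (g : Sym2 V) ∧ (w ∈ tr u ∨ w ∈ tr (m u))) →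
        ¬ G.lineGraph.Adj g f := by
      rintro g ⟨w, hwg, hwA⟩ hadj
      obtain ⟨hne', y, hyg, hyf⟩ := SimpleGraph.lineGraph_adj_iff_exists.mp hadj
      have hynA : ¬ (y ∈ tr u ∨ y ∈ tr (m u)) := fun hh => hfA y hh hyf
      have hs := Sym2.other_spec hwg
      have hadjw : G.Adj w (Sym2.Mem.other hwg) := by
        rw [← SimpleGraph.mem_edgeSet, hs]
        exact g.2
      have hyw : y ≠ w := by
        rintro rfl
        exact hynA hwA
      have hyz : y = Sym2.Mem.other hwg := by
        rw [← hs, Sym2.mem_iff] at hyg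
        rcases hyg with h | h
        · exact absurd h hyw
        · exact h
      rcases hnbr w _ hadjw with h | h | h
      · -- other = s₁ w : then y ∈ tr w ⊆ A, contradiction
        apply hynA
        have hytrw : y ∈ tr w := by
          rw [hmem_tr, hyz, h]
          tauto
        rcases hwA with hw | hw
        · exact Or.inl (by rw [← htreq u w hw]; exact hytrw)
        · exact Or.inr (by rw [← htreq (m u) w hw]; exact hytrw)
      · apply hynA
        have hytrw : y ∈ tr w := by
          rw [hmem_tr, hyz, h]
          tauto
        rcases hwA with hw | hw
        · exact Or.inl (by rw [← htreq u w hw]; exact hytrw)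
        · exact Or.inr (by rw [← htreq (m u) w hw]; exact hytrw)
      · -- other = m w : then y = m w ∈ f forces f = g
        apply hne'
        apply Subtype.ext
        have hymw : y = m w := by rw [hyz, h]
        have hgval : (g : Sym2 V) = s(w, m w) := by rw [← hs, h]
        have hyf' : (m w) ∈ (f : Sym2 V) := hymw ▸ hyf
        rw [hfval, Sym2.mem_iff] at hyf'
        rcases hyf' with hh | hh
        · rw [hgval, hfval, ← hh, hminv, Sym2.eq_swap]
        · have huu : w = u' := by
            have h9 := congrArg m hh
            rw [hminv, hminv] at h9
            exact h9
          rw [hgval, hfval, huu]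
    -- now rule out walks of length ≤ 3
    by_contra hle
    push_neg at hle
    have humem : u ∈ (e : Sym2 V) := by
      rw [heval]
      exact Sym2.mem_mk_left _ _
    cases p with
    | nil => exact hne rfl
    | cons h1 q1 =>
      rename_i b1
      cases q1 with
      | nil => exact hC3 e ⟨u, humem, Or.inl (htrmem u)⟩ h1
      | cons h2 q2 =>
        rename_i b2
        cases q2 with
        | nil =>
          obtain ⟨hne12, w, hw1, hw2⟩ := SimpleGraph.lineGraph_adj_iff_exists.mp h2
          exact hC3 b1 ⟨w, hw1, hC1 b1 h1 w hw1⟩ h2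
        | cons h3 q3 =>
          rename_i b3
          have hq3 : q3.length = 0 := by
            simp only [SimpleGraph.Walk.length_cons] at hle
            omega
          have hb3 : b3 = f := SimpleGraph.Walk.eq_of_length_eq_zero hq3
          subst hb3
          obtain ⟨hne12, w, hw1, hw2⟩ := SimpleGraph.lineGraph_adj_iff_exists.mp h2
          exact hC3 b2 ⟨w, hw2, hC1 b1 h1 w hw1⟩ h3
  · -- a matching class
    rw [hmat, if_neg h3]
    cases p with
    | nil => exact absurd rfl hne
    | cons h1 q1 =>
      cases q1 with
      | nil =>
        exfalso
        obtain ⟨hne', y, hye, hyf⟩ := SimpleGraph.lineGraph_adj_iff_exists.mp h1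
        exact hproper e f y hye hyf hne hcc
      | cons h2 q2 =>
        simp only [SimpleGraph.Walk.length_cons]
        omega
end

section
/- Let G be a connected claw-free cubic graph with at least one bridge, and let G_i be the induced subgraph of G on a connected component of the graph obtained from G by deleting all bridges of G. Suppose G_i is 2-edge-connected, has maximum degree 3, and has at least 5 vertices. Then every vertex of degree 2 in G_i lies on a triangle of G_i (that is, if v has degree 2 in G_i with neighbors u and w, then uw is an edge of G_i), and consequently the set of degree-2 vertices of G_i is an independent set in G_i. -/
open SimpleGraph

/-- If `S` is closed under adjacency in `H`, then walks starting in `S` end in `S`. -/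
lemma walk_mem_of_closed {V : Type*} (H : SimpleGraph V) (S : Set V)
    (hS : ∀ a b, a ∈ S → H.Adj a b → b ∈ S) :
    ∀ {a b : V}, H.Walk a b → a ∈ S → b ∈ S
  | _, _, SimpleGraph.Walk.nil, ha => ha
  | _, _, SimpleGraph.Walk.cons h p, ha => walk_mem_of_closed H S hS p (hS _ _ ha h)

/-- In a connected claw-free cubic graph with a bridge, let `Gᵢ = G.induce K.supp` be the
induced subgraph on a connected component `K` of the graph obtained by deleting all bridges.
If `Gᵢ` is 2-edge-connected with maximum degree 3 and at least 5 vertices, then every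
degree-2 vertex of `Gᵢ` lies on a triangle of `Gᵢ`, and the degree-2 vertices form an
independent set. -/
theorem degree_two_vertices_on_triangle {V : Type*} [Fintype V]
    (G : SimpleGraph V) (hconn : G.Connected) (hclaw : G.ClawFree) (hcubic : G.IsCubic)
    (hbridge : ∃ e : Sym2 V, G.IsBridge e)
    (K : (G.deleteEdges {e | G.IsBridge e}).ConnectedComponent)
    (h2ec : (G.induce K.supp).TwoEdgeConnected)
    (hmaxdeg : (∀ v, ((G.induce K.supp).neighborSet v).ncard ≤ 3) ∧
      ∃ v, ((G.induce K.supp).neighborSet v).ncard = 3)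
    (hcard : 5 ≤ Nat.card K.supp) :
    (∀ v u w : K.supp, ((G.induce K.supp).neighborSet v).ncard = 2 →
      (G.induce K.supp).Adj v u → (G.induce K.supp).Adj v w → u ≠ w →
      (G.induce K.supp).Adj u w) ∧
    (∀ v w : K.supp, ((G.induce K.supp).neighborSet v).ncard = 2 →
      ((G.induce K.supp).neighborSet w).ncard = 2 → ¬ (G.induce K.supp).Adj v w) := by
  obtain ⟨hconn2, -, hnobr⟩ := h2ec
  -- Step A: a degree-2 vertex of Gᵢ has a G-neighbor outside K.supp
  have hx : ∀ v : K.supp, ((G.induce K.supp).neighborSet v).ncard = 2 →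
      ∃ x : V, G.Adj v.val x ∧ x ∉ K.supp := by
    intro v hv
    by_contra h
    push_neg at h
    let g : (G.neighborSet v.val) → ((G.induce K.supp).neighborSet v) :=
      fun x => ⟨⟨x.val, h x.val x.prop⟩, x.prop⟩
    have ginj : Function.Injective g := by
      intro a b hab
      exact Subtype.ext
        (congrArg (fun z : ((G.induce K.supp).neighborSet v) => (z.val.val : V)) hab)
    have hle : (G.neighborSet v.val).ncard ≤ ((G.induce K.supp).neighborSet v).ncard := by
      rw [← Nat.card_coe_set_eq, ← Nat.card_coe_set_eq]
      exact Nat.card_le_card_of_injective g ginj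
    rw [hcubic v.val, hv] at hle
    omega
  -- Step B: an edge from K.supp to outside is a bridge of G
  have hbr : ∀ (v : K.supp) (x : V), G.Adj v.val x → x ∉ K.supp →
      G.IsBridge s(v.val, x) := by
    intro v x hvx hxK
    by_contra hnb
    apply hxK
    have hadj : (G.deleteEdges {e | G.IsBridge e}).Adj v.val x := by
      rw [SimpleGraph.deleteEdges_adj]
      exact ⟨hvx, hnb⟩
    have hv := v.prop
    rw [SimpleGraph.ConnectedComponent.mem_supp_iff] at hv ⊢
    rw [← hv]
    exact SimpleGraph.ConnectedComponent.sound hadj.symm.reachable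
  -- Step C: the other end of a bridge is not adjacent to any other neighbor in K.supp
  have hnadj : ∀ (v u : K.supp) (x : V), G.IsBridge s(v.val, x) → x ∉ K.supp →
      G.Adj v.val u.val → ¬ G.Adj u.val x := by
    intro v u x hb hxK hvu hux
    have hux' : u.val ≠ x := fun h => hxK (h ▸ u.prop)
    have hvx' : v.val ≠ x := fun h => hxK (h ▸ v.prop)
    rw [SimpleGraph.isBridge_iff] at hb
    apply hb
    have h1 : (G \ SimpleGraph.fromEdgeSet {s(v.val, x)}).Adj v.val u.val := by
      rw [SimpleGraph.sdiff_adj, SimpleGraph.fromEdgeSet_adj]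
      refine ⟨hvu, ?_⟩
      rintro ⟨he, -⟩
      rw [Set.mem_singleton_iff, Sym2.eq_iff] at he
      rcases he with ⟨-, h2⟩ | ⟨h2, -⟩
      · exact hux' h2
      · exact hvx' h2
    have h2 : (G \ SimpleGraph.fromEdgeSet {s(v.val, x)}).Adj u.val x := by
      rw [SimpleGraph.sdiff_adj, SimpleGraph.fromEdgeSet_adj]
      refine ⟨hux, ?_⟩
      rintro ⟨he, -⟩
      rw [Set.mem_singleton_iff, Sym2.eq_iff] at he
      rcases he with ⟨h2, -⟩ | ⟨h2, -⟩
      · exact hvu.ne' h2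
      · exact hux' h2
    exact h1.reachable.trans h2.reachable
  -- Part 1
  have part1 : ∀ v u w : K.supp, ((G.induce K.supp).neighborSet v).ncard = 2 →
      (G.induce K.supp).Adj v u → (G.induce K.supp).Adj v w → u ≠ w →
      (G.induce K.supp).Adj u w := by
    intro v u w hv2 hvu hvw huw
    obtain ⟨x, hvx, hxK⟩ := hx v hv2
    have hb := hbr v x hvx hxK
    by_contra hne
    apply hclaw
    have hvu' : G.Adj v.val u.val := hvu
    have hvw' : G.Adj v.val w.val := hvw
    exact ⟨v.val, u.val, w.val, x, hvu', hvw', hvx,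
      fun h => huw (Subtype.ext h),
      fun h => hxK (h ▸ u.prop),
      fun h => hxK (h ▸ w.prop),
      hne, hnadj v u x hb hxK hvu', hnadj v w x hb hxK hvw'⟩
  refine ⟨part1, ?_⟩
  -- Part 2
  intro v w hv2 hw2 hvw
  -- find the other neighbor u of v
  have hu : ∃ u : K.supp, (G.induce K.supp).Adj v u ∧ u ≠ w := by
    by_contra h
    push_neg at h
    have hsub : (G.induce K.supp).neighborSet v ⊆ {w} := fun u hu => h u hu
    have := Set.ncard_le_ncard hsub (Set.finite_singleton w)
    rw [hv2, Set.ncard_singleton] at this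
    omega
  obtain ⟨u, hvu, huw⟩ := hu
  have htri : (G.induce K.supp).Adj u w := part1 v u w hv2 hvu hvw huw
  -- neighbor sets of v and w are exactly pairs
  have hNv : ({u, w} : Set K.supp) = (G.induce K.supp).neighborSet v := by
    apply Set.eq_of_subset_of_ncard_le
    · rintro z (rfl | rfl)
      · exact hvu
      · exact hvw
    · rw [hv2, Set.ncard_pair huw]
    · exact Set.toFinite _
  have hNw : ({v, u} : Set K.supp) = (G.induce K.supp).neighborSet w := by
    apply Set.eq_of_subset_of_ncard_le
    · rintro z (rfl | rfl)
      · exact hvw.symm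
      · exact htri.symm
    · rw [hw2, Set.ncard_pair hvu.ne]
    · exact Set.toFinite _
  by_cases hcase : ∃ t : K.supp, (G.induce K.supp).Adj u t ∧ t ≠ v ∧ t ≠ w
  · -- u has a third neighbor t, and edge u-t is a bridge of Gᵢ
    obtain ⟨t, hut, htv, htw⟩ := hcase
    have hNu : ({v, w, t} : Set K.supp) = (G.induce K.supp).neighborSet u := by
      apply Set.eq_of_subset_of_ncard_le
      · rintro z (rfl | rfl | rfl)
        · exact hvu.symm
        · exact htri
        · exact hut
      · refine le_trans (hmaxdeg.1 u) ?_
        rw [Set.ncard_insert_of_notMem (by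
          rintro (rfl | rfl)
          · exact hvw.ne rfl
          · exact htv rfl) (Set.toFinite _),
          Set.ncard_pair (fun h => htw h.symm)]
      · exact Set.toFinite _
    apply hnobr s(u, t)
    rw [SimpleGraph.isBridge_iff]
    intro hreach
    have hclosed : ∀ a b : K.supp, a ∈ ({v, w, u} : Set K.supp) →
        ((G.induce K.supp) \ SimpleGraph.fromEdgeSet {s(u, t)}).Adj a b →
        b ∈ ({v, w, u} : Set K.supp) := by
      rintro a b (rfl | rfl | rfl) hab
      · have : b ∈ (G.induce K.supp).neighborSet a := hab.1
        rw [← hNv] at this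
        rcases this with rfl | rfl
        · exact Or.inr (Or.inr rfl)
        · exact Or.inr (Or.inl rfl)
      · have : b ∈ (G.induce K.supp).neighborSet a := hab.1
        rw [← hNw] at this
        rcases this with rfl | rfl
        · exact Or.inl rfl
        · exact Or.inr (Or.inr rfl)
      · have : b ∈ (G.induce K.supp).neighborSet a := hab.1
        rw [← hNu] at this
        rcases this with rfl | rfl | rfl
        · exact Or.inl rfl
        · exact Or.inr (Or.inl rfl)
        · exfalso
          rw [SimpleGraph.sdiff_adj, SimpleGraph.fromEdgeSet_adj] at hab
          exact hab.2 ⟨rfl, hut.ne⟩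
    obtain ⟨p⟩ := hreach
    have := walk_mem_of_closed _ _ hclosed p (Or.inr (Or.inr rfl))
    rcases this with rfl | rfl | rfl
    · exact htv rfl
    · exact htw rfl
    · exact hut.ne rfl
  · -- u has only v and w as neighbors: Gᵢ has at most 3 vertices
    push_neg at hcase
    have hclosed : ∀ a b : K.supp, a ∈ ({v, w, u} : Set K.supp) →
        (G.induce K.supp).Adj a b → b ∈ ({v, w, u} : Set K.supp) := by
      rintro a b (rfl | rfl | rfl) hab
      · have : b ∈ (G.induce K.supp).neighborSet a := hab
        rw [← hNv] at this
        rcases this with rfl | rfl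
        · exact Or.inr (Or.inr rfl)
        · exact Or.inr (Or.inl rfl)
      · have : b ∈ (G.induce K.supp).neighborSet a := hab
        rw [← hNw] at this
        rcases this with rfl | rfl
        · exact Or.inl rfl
        · exact Or.inr (Or.inr rfl)
      · by_cases hbv : b = v
        · exact Or.inl hbv
        · exact Or.inr (Or.inl (hcase b hab hbv))
    have huniv : (Set.univ : Set K.supp) ⊆ {v, w, u} := by
      intro z _
      obtain ⟨p⟩ := hconn2.preconnected v z
      exact walk_mem_of_closed _ _ hclosed p (Or.inl rfl)
    have h1 : (Set.univ : Set K.supp).ncard ≤ ({v, w, u} : Set K.supp).ncard :=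
      Set.ncard_le_ncard huniv (Set.toFinite _)
    have h2 : ({v, w, u} : Set K.supp).ncard ≤ 3 := by
      refine le_trans (Set.ncard_insert_le _ _) ?_
      have := Set.ncard_insert_le w ({u} : Set K.supp)
      rw [Set.ncard_singleton] at this
      omega
    rw [Set.ncard_univ] at h1
    omega
end

section
/- Let G be a connected claw-free cubic graph with at least one bridge, and let G_i be the induced subgraph of G on a connected component of the graph obtained from G by deleting all bridges of G. Suppose G_i is 2-edge-connected, has maximum degree 3, and has at least 5 vertices. Let v be a vertex of degree 2 in G_i with neighbors u and w (so that uw is an edge of G_i), let s be the neighbor of u in G_i distinct from v and w, and let b be the neighbor of w in G_i distinct from u and v. Then s ≠ b, and both s and b have degree 3 in G_i. -/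
open SimpleGraph

lemma reach_closed {W : Type*} {H : SimpleGraph W} {A : Set W}
    (hA : ∀ a ∈ A, ∀ b, H.Adj a b → b ∈ A) {x y : W}
    (h : H.Reachable x y) (hx : x ∈ A) : y ∈ A := by
  obtain ⟨p⟩ := h
  induction p with
  | nil => exact hx
  | cons h q ih => exact ih (hA _ hx _ h)

lemma eq_pair {α : Type*} [Finite α] {S : Set α} {a b : α} (hS : S.ncard ≤ 2)
    (ha : a ∈ S) (hb : b ∈ S) (hab : a ≠ b) : S = {a, b} := by
  refine (Set.eq_of_subset_of_ncard_le ?_ ?_ (Set.toFinite S)).symm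
  · intro x hx; rcases hx with rfl | hx; exact ha
    rcases hx with rfl; exact hb
  · rw [Set.ncard_insert_of_notMem (by simp [hab]), Set.ncard_singleton]
    exact hS

lemma eq_triple {α : Type*} [Finite α] {S : Set α} {a b c : α} (hS : S.ncard ≤ 3)
    (ha : a ∈ S) (hb : b ∈ S) (hc : c ∈ S) (hab : a ≠ b) (hac : a ≠ c) (hbc : b ≠ c) :
    S = {a, b, c} := by
  refine (Set.eq_of_subset_of_ncard_le ?_ ?_ (Set.toFinite S)).symm
  · intro x hx
    rcases hx with rfl | hx; exact ha
    rcases hx with rfl | hx; exact hb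
    rcases hx with rfl; exact hc
  · rw [Set.ncard_insert_of_notMem (by simp [hab, hac]),
      Set.ncard_insert_of_notMem (by simp [hbc]), Set.ncard_singleton]
    exact hS

lemma exists_second {α : Type*} [Finite α] {S : Set α} {a : α} (hS : S.ncard = 2)
    (ha : a ∈ S) : ∃ t, t ∈ S ∧ t ≠ a ∧ S = {a, t} := by
  have hne : ¬ S ⊆ {a} := by
    intro h
    have := Set.ncard_le_ncard h (Set.toFinite _)
    simp [Set.ncard_singleton, hS] at this
  obtain ⟨t, htS, ht⟩ := Set.not_subset.mp hne
  simp only [Set.mem_singleton_iff] at ht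
  exact ⟨t, htS, ht, eq_pair hS.le ha htS (fun h => ht h.symm)⟩

lemma exists_third {α : Type*} [Finite α] {S : Set α} {a b : α} (hS : S.ncard = 3)
    (ha : a ∈ S) (hb : b ∈ S) (hab : a ≠ b) :
    ∃ c, c ∈ S ∧ c ≠ a ∧ c ≠ b ∧ S = {a, b, c} := by
  have hne : ¬ S ⊆ {a, b} := by
    intro h
    have h1 := Set.ncard_le_ncard h (Set.toFinite _)
    have h2 : ({a, b} : Set α).ncard ≤ 2 :=
      (Set.ncard_insert_le _ _).trans (by simp)
    omega
  obtain ⟨c, hcS, hc⟩ := Set.not_subset.mp hne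
  simp only [Set.mem_insert_iff, Set.mem_singleton_iff, not_or] at hc
  exact ⟨c, hcS, hc.1, hc.2, eq_triple hS.le ha hb hcS hab (fun h => hc.1 h.symm)
    (fun h => hc.2 h.symm)⟩

-- triangle implies same component (no bridge on a triangle edge)
lemma triangle_mem_supp {V : Type*} [Fintype V] (G : SimpleGraph V)
    (K : (G.deleteEdges {e | G.IsBridge e}).ConnectedComponent)
    {a x y : V} (ha : a ∈ K.supp) (hax : G.Adj a x) (hay : G.Adj a y)
    (hxy : G.Adj x y) : x ∈ K.supp := by
  have hnb : ¬ G.IsBridge s(a, x) := by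
    rw [SimpleGraph.isBridge_iff]
    intro hreach
    apply hreach
    have h1 : (G \ fromEdgeSet {s(a, x)}).Adj a y := by
      simp only [sdiff_adj, fromEdgeSet_adj, Set.mem_singleton_iff, not_and]
      refine ⟨hay, fun he _ => ?_⟩
      rw [Sym2.congr_right] at he
      exact hxy.ne he.symm
    have h2 : (G \ fromEdgeSet {s(a, x)}).Adj y x := by
      simp only [sdiff_adj, fromEdgeSet_adj, Set.mem_singleton_iff, not_and]
      refine ⟨hxy.symm, fun he _ => ?_⟩
      rw [Sym2.congr_left] at he
      exact hay.ne he.symm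
    exact h1.reachable.trans h2.reachable
  have hadj : (G.deleteEdges {e | G.IsBridge e}).Adj a x := by
    rw [SimpleGraph.deleteEdges_adj]
    exact ⟨hax, hnb⟩
  rw [ConnectedComponent.mem_supp_iff] at ha ⊢
  rw [← ha]
  exact ConnectedComponent.sound hadj.symm.reachable

-- degree in the induced graph equals card of neighbors inside the component
lemma ncard_induce_neighborSet {V : Type*} [Fintype V] (G : SimpleGraph V)
    (K : Set V) (a : K) :
    ((G.induce K).neighborSet a).ncard = (G.neighborSet ↑a ∩ K).ncard := by
  rw [← Set.ncard_image_of_injective _ (Subtype.val_injective)]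
  congr 1
  ext x
  constructor
  · rintro ⟨b, hb, rfl⟩
    exact ⟨hb, b.2⟩
  · rintro ⟨hx, hxK⟩
    exact ⟨⟨x, hxK⟩, hx, rfl⟩

-- at most one neighbor outside the component
lemma outside_le_one {V : Type*} [Fintype V] (G : SimpleGraph V)
    (hclaw : G.ClawFree) (hcubic : G.IsCubic)
    (K : (G.deleteEdges {e | G.IsBridge e}).ConnectedComponent)
    (a : V) (ha : a ∈ K.supp) : (G.neighborSet a \ K.supp).ncard ≤ 1 := by
  rw [Set.ncard_le_one (Set.toFinite _)]
  rintro x ⟨hx, hxK⟩ y ⟨hy, hyK⟩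
  by_contra hxy
  obtain ⟨z, hz, hzx, hzy, -⟩ := exists_third (hcubic a) hx hy hxy
  exact hclaw ⟨a, x, y, z, hx, hy, hz, hxy, fun h => hzx h.symm, fun h => hzy h.symm,
    fun h => hxK (triangle_mem_supp G K ha hx hy h),
    fun h => hxK (triangle_mem_supp G K ha hx hz h),
    fun h => hyK (triangle_mem_supp G K ha hy hz h)⟩

lemma two_le_induce_degree {V : Type*} [Fintype V] (G : SimpleGraph V)
    (hclaw : G.ClawFree) (hcubic : G.IsCubic)
    (K : (G.deleteEdges {e | G.IsBridge e}).ConnectedComponent)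
    (a : K.supp) : 2 ≤ ((G.induce K.supp).neighborSet a).ncard := by
  have h1 := Set.ncard_inter_add_ncard_diff_eq_ncard (G.neighborSet ↑a) K.supp
    (Set.toFinite _)
  have h2 := outside_le_one G hclaw hcubic K ↑a a.2
  have h3 := hcubic (↑a : V)
  rw [ncard_induce_neighborSet]
  omega

lemma degree_third_eq_three {V : Type*} [Fintype V]
    (G : SimpleGraph V) (hclaw : G.ClawFree) (hcubic : G.IsCubic)
    (K : (G.deleteEdges {e | G.IsBridge e}).ConnectedComponent)
    (hHconn : (G.induce K.supp).Connected)
    (hmax : ∀ x, ((G.induce K.supp).neighborSet x).ncard ≤ 3)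
    (hcard : 5 ≤ Nat.card K.supp)
    (v u w s : K.supp)
    (hv2 : ((G.induce K.supp).neighborSet v).ncard = 2)
    (hvu : (G.induce K.supp).Adj v u) (hvw : (G.induce K.supp).Adj v w) (huw : u ≠ w)
    (huw' : (G.induce K.supp).Adj u w)
    (hus : (G.induce K.supp).Adj u s) (hsv : s ≠ v) (hsw : s ≠ w) :
    ((G.induce K.supp).neighborSet s).ncard = 3 := by
  set H := G.induce K.supp with hHdef
  by_contra hdeg
  have hdeg2 : (H.neighborSet s).ncard = 2 := by
    have h1 : 2 ≤ (H.neighborSet s).ncard := two_le_induce_degree G hclaw hcubic K s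
    have h2 := hmax s
    omega
  have nbrv : H.neighborSet v = {u, w} := eq_pair hv2.le hvu hvw huw
  have nbru : H.neighborSet u = {v, w, s} :=
    eq_triple (hmax u) hvu.symm huw' hus hvw.ne (Ne.symm hsv) (Ne.symm hsw)
  obtain ⟨t, htmem, htu, hst⟩ :=
    exists_second hdeg2 (show u ∈ H.neighborSet s from hus.symm)
  have hadj_st : H.Adj s t := htmem
  have hinter : (G.neighborSet ↑s ∩ K.supp).ncard = 2 := by
    rw [← ncard_induce_neighborSet G K.supp s]; exact hdeg2
  have hdiff : (G.neighborSet ↑s \ K.supp).ncard = 1 := by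
    have h1 := Set.ncard_inter_add_ncard_diff_eq_ncard (G.neighborSet ↑s) K.supp
      (Set.toFinite _)
    have h2 := hcubic (↑s : V)
    omega
  obtain ⟨x, hxmem⟩ : (G.neighborSet ↑s \ K.supp).Nonempty :=
    Set.nonempty_of_ncard_ne_zero (by rw [hdiff]; omega)
  obtain ⟨hxs, hxK⟩ := hxmem
  have hGsu : G.Adj ↑s ↑u := hus.symm
  have hGst : G.Adj ↑s ↑t := hadj_st
  have hut : (↑u : V) ≠ ↑t := fun h => htu (Subtype.val_injective h.symm)
  have hux : (↑u : V) ≠ x := fun h => hxK (h ▸ u.2)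
  have htx : (↑t : V) ≠ x := fun h => hxK (h ▸ t.2)
  have hadj : G.Adj ↑u ↑t := by
    by_contra hut'
    by_cases h1 : G.Adj ↑u x
    · exact hxK (triangle_mem_supp G K s.2 hxs hGsu h1.symm)
    by_cases h2 : G.Adj ↑t x
    · exact hxK (triangle_mem_supp G K s.2 hxs hGst h2.symm)
    exact hclaw ⟨↑s, ↑u, ↑t, x, hGsu, hGst, hxs, hut, hux, htx, hut', h1, h2⟩
  have hHut : H.Adj u t := hadj
  have htmem' : t ∈ H.neighborSet u := hHut
  rw [nbru] at htmem'
  have hts : t ≠ s := Ne.symm hadj_st.ne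
  have htw : t = w := by
    rcases htmem' with rfl | rfl | rfl
    · exfalso
      have : s ∈ H.neighborSet t := hadj_st.symm
      rw [nbrv] at this
      rcases this with rfl | rfl
      · exact hus.ne rfl
      · exact hsw rfl
    · rfl
    · exact absurd rfl hts
  subst htw
  have nbrw : H.neighborSet t = {v, u, s} :=
    eq_triple (hmax t) hvw.symm huw'.symm hadj_st.symm hvu.ne (Ne.symm hsv)
      hus.ne
  have nbrs : H.neighborSet s = {u, t} := hst
  have hA : ∀ a ∈ ({v, u, t, s} : Set K.supp), ∀ c, H.Adj a c →
      c ∈ ({v, u, t, s} : Set K.supp) := by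
    rintro a (rfl | rfl | rfl | rfl) c hc
    · have hmem : c ∈ H.neighborSet a := hc
      rw [nbrv] at hmem
      rcases hmem with rfl | rfl <;> simp
    · have hmem : c ∈ H.neighborSet a := hc
      rw [nbru] at hmem
      rcases hmem with rfl | rfl | rfl <;> simp
    · have hmem : c ∈ H.neighborSet a := hc
      rw [nbrw] at hmem
      rcases hmem with rfl | rfl | rfl <;> simp
    · have hmem : c ∈ H.neighborSet a := hc
      rw [nbrs] at hmem
      rcases hmem with rfl | rfl <;> simp
  obtain ⟨y, hy⟩ : ∃ y, y ∉ ({v, u, t, s} : Set K.supp) := by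
    by_contra h
    push_neg at h
    have hAuniv : ({v, u, t, s} : Set K.supp) = Set.univ := Set.eq_univ_of_forall h
    have h5 : (Set.univ : Set K.supp).ncard = Nat.card K.supp := Set.ncard_univ _
    have h1 : ({s} : Set K.supp).ncard = 1 := Set.ncard_singleton s
    have h2 : ({t, s} : Set K.supp).ncard ≤ 2 :=
      (Set.ncard_insert_le _ _).trans (by omega)
    have h3 : ({u, t, s} : Set K.supp).ncard ≤ 3 :=
      (Set.ncard_insert_le _ _).trans (by omega)
    have h4 : ({v, u, t, s} : Set K.supp).ncard ≤ 4 :=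
      (Set.ncard_insert_le _ _).trans (by omega)
    rw [hAuniv, h5] at h4
    omega
  exact hy (reach_closed hA (hHconn.preconnected s y) (by simp))

/-- With `Gᵢ` as in the bridge-component set-up: if `v` has degree 2 in `Gᵢ` with neighbors
`u` and `w`, `s` is the third neighbor of `u` and `b` is the third neighbor of `w`, then
`s ≠ b` and both `s` and `b` have degree 3 in `Gᵢ`. -/
theorem third_neighbors_distinct_and_degree_three {V : Type*} [Fintype V]
    (G : SimpleGraph V) (hconn : G.Connected) (hclaw : G.ClawFree) (hcubic : G.IsCubic)
    (hbridge : ∃ e : Sym2 V, G.IsBridge e)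
    (K : (G.deleteEdges {e | G.IsBridge e}).ConnectedComponent)
    (h2ec : (G.induce K.supp).TwoEdgeConnected)
    (hmaxdeg : (∀ v, ((G.induce K.supp).neighborSet v).ncard ≤ 3) ∧
      ∃ v, ((G.induce K.supp).neighborSet v).ncard = 3)
    (hcard : 5 ≤ Nat.card K.supp)
    (v u w s b : K.supp)
    (hv2 : ((G.induce K.supp).neighborSet v).ncard = 2)
    (hvu : (G.induce K.supp).Adj v u) (hvw : (G.induce K.supp).Adj v w) (huw : u ≠ w)
    (huw' : (G.induce K.supp).Adj u w)
    (hus : (G.induce K.supp).Adj u s) (hsv : s ≠ v) (hsw : s ≠ w)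
    (hwb : (G.induce K.supp).Adj w b) (hbu : b ≠ u) (hbv : b ≠ v) :
    s ≠ b ∧ ((G.induce K.supp).neighborSet s).ncard = 3 ∧
      ((G.induce K.supp).neighborSet b).ncard = 3 := by
  obtain ⟨hHconn, -, hnobridge⟩ := h2ec
  have hmax := hmaxdeg.1
  have hs3 : ((G.induce K.supp).neighborSet s).ncard = 3 :=
    degree_third_eq_three G hclaw hcubic K hHconn hmax hcard v u w s hv2 hvu hvw huw
      huw' hus hsv hsw
  have hb3 : ((G.induce K.supp).neighborSet b).ncard = 3 :=
    degree_third_eq_three G hclaw hcubic K hHconn hmax hcard v w u b hv2 hvw hvu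
      (Ne.symm huw) huw'.symm hwb hbv hbu
  refine ⟨?_, hs3, hb3⟩
  rintro rfl
  have nbrv : (G.induce K.supp).neighborSet v = {u, w} := eq_pair hv2.le hvu hvw huw
  have nbru : (G.induce K.supp).neighborSet u = {v, w, s} :=
    eq_triple (hmax u) hvu.symm huw' hus hvw.ne (Ne.symm hsv) (Ne.symm hsw)
  have nbrw : (G.induce K.supp).neighborSet w = {v, u, s} :=
    eq_triple (hmax w) hvw.symm huw'.symm hwb hvu.ne (Ne.symm hsv) (Ne.symm hbu)
  obtain ⟨t, htmem, htu, htw, hnbrs⟩ := exists_third hs3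
    (show u ∈ (G.induce K.supp).neighborSet s from hus.symm)
    (show w ∈ (G.induce K.supp).neighborSet s from hwb.symm) huw
  have hadj_st : (G.induce K.supp).Adj s t := htmem
  have hts : t ≠ s := Ne.symm hadj_st.ne
  have htv : t ≠ v := by
    rintro rfl
    have hmem : s ∈ (G.induce K.supp).neighborSet t := hadj_st.symm
    rw [nbrv] at hmem
    rcases hmem with rfl | rfl
    · exact hbu rfl
    · exact hsw rfl
  apply hnobridge s(s, t)
  rw [SimpleGraph.isBridge_iff]
  refine fun hreach => ?_
  have hA : ∀ a ∈ ({v, u, w, s} : Set K.supp), ∀ c,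
      ((G.induce K.supp) \ fromEdgeSet {s(s, t)}).Adj a c →
      c ∈ ({v, u, w, s} : Set K.supp) := by
    rintro a ha c hc
    rw [sdiff_adj] at hc
    obtain ⟨hc1, hc2⟩ := hc
    rcases ha with rfl | rfl | rfl | rfl
    · have hmem : c ∈ (G.induce K.supp).neighborSet a := hc1
      rw [nbrv] at hmem
      rcases hmem with rfl | rfl <;> simp
    · have hmem : c ∈ (G.induce K.supp).neighborSet a := hc1
      rw [nbru] at hmem
      rcases hmem with rfl | rfl | rfl <;> simp
    · have hmem : c ∈ (G.induce K.supp).neighborSet a := hc1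
      rw [nbrw] at hmem
      rcases hmem with rfl | rfl | rfl <;> simp
    · have hmem : c ∈ (G.induce K.supp).neighborSet a := hc1
      rw [hnbrs] at hmem
      rcases hmem with rfl | rfl | rfl
      · simp
      · simp
      · exact absurd ((fromEdgeSet_adj _).mpr ⟨rfl, hadj_st.ne⟩) hc2
  have hmemA := reach_closed hA hreach (by simp)
  rcases hmemA with rfl | rfl | rfl | rfl
  · exact htv rfl
  · exact htu rfl
  · exact htw rfl
  · exact hts rfl
end

section
/- Let G be a connected claw-free cubic graph with at least one bridge, and let G_i be the induced subgraph of G on a connected component of the graph obtained from G by deleting all bridges of G. Suppose G_i is 2-edge-connected, has maximum degree 3, and has at least 5 vertices, and suppose the number of degree-2 vertices of G_i is odd. Let v be a vertex of degree 2 in G_i with neighbors u and w, let s be the neighbor of u in G_i distinct from v and w, and let b be the neighbor of w in G_i distinct from u and v. Then sb is not an edge of G_i. -/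
open SimpleGraph

section Helpers
variable {V : Type*} [Fintype V] {G : SimpleGraph V}

lemma cubic_nbhd_eq (hc : G.IsCubic) {a x y z : V} (hx : G.Adj a x) (hy : G.Adj a y)
    (hz : G.Adj a z) (hxy : x ≠ y) (hxz : x ≠ z) (hyz : y ≠ z) :
    G.neighborSet a = {x, y, z} := by
  refine (Set.eq_of_subset_of_ncard_le ?_ ?_ (Set.toFinite _)).symm
  · intro c hmem
    simp only [Set.mem_insert_iff, Set.mem_singleton_iff] at hmem
    rcases hmem with rfl | rfl | rfl <;> simpa using ‹_›
  · rw [hc a, Set.ncard_eq_three.mpr ⟨x, y, z, hxy, hxz, hyz, rfl⟩]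

lemma cubic_third (hc : G.IsCubic) {a x y : V} (hx : G.Adj a x) (hy : G.Adj a y)
    (hxy : x ≠ y) : ∃ z, G.Adj a z ∧ z ≠ x ∧ z ≠ y := by
  have h : ({x, y} : Set V).ncard < (G.neighborSet a).ncard := by
    rw [hc a, Set.ncard_pair hxy]; norm_num
  obtain ⟨z, hz, hz'⟩ := Set.exists_mem_notMem_of_ncard_lt_ncard h (Set.toFinite _)
  simp only [Set.mem_insert_iff, Set.mem_singleton_iff, not_or] at hz'
  exact ⟨z, hz, hz'.1, hz'.2⟩

lemma not_isBridge_of_path2 {a c d : V} (h1 : G.Adj a d) (h2 : G.Adj d c)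
    (hda : d ≠ a) (hdc : d ≠ c) : ¬ G.IsBridge s(a, c) := by
  intro hb
  rw [isBridge_iff] at hb
  refine hb ?_
  have hac : a ≠ c := by rintro rfl; exact hb (Reachable.refl _)
  have w1 : (G \ fromEdgeSet {s(a, c)}).Adj a d := by
    rw [sdiff_adj, fromEdgeSet_adj]
    refine ⟨h1, fun hcon => ?_⟩
    rw [Set.mem_singleton_iff, Sym2.eq_iff] at hcon
    rcases hcon.1 with ⟨-, h⟩ | ⟨h1', h2'⟩
    · exact hdc h
    · exact hac h1'
  have w2 : (G \ fromEdgeSet {s(a, c)}).Adj d c := by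
    rw [sdiff_adj, fromEdgeSet_adj]
    refine ⟨h2, fun hcon => ?_⟩
    rw [Set.mem_singleton_iff, Sym2.eq_iff] at hcon
    rcases hcon.1 with ⟨h, -⟩ | ⟨h1', h2'⟩
    · exact hda h
    · exact hdc h1'
  exact w1.reachable.trans w2.reachable

end Helpers


set_option maxHeartbeats 1000000 in
/-- With `Gᵢ` as in the bridge-component set-up and an odd number of degree-2 vertices:
if `v` has degree 2 in `Gᵢ` with neighbors `u` and `w`, `s` is the third neighbor of `u`
and `b` is the third neighbor of `w`, then `sb` is not an edge of `Gᵢ`. -/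
theorem third_neighbors_nonadjacent_of_odd {V : Type*} [Fintype V]
    (G : SimpleGraph V) (hconn : G.Connected) (hclaw : G.ClawFree) (hcubic : G.IsCubic)
    (hbridge : ∃ e : Sym2 V, G.IsBridge e)
    (K : (G.deleteEdges {e | G.IsBridge e}).ConnectedComponent)
    (h2ec : (G.induce K.supp).TwoEdgeConnected)
    (hmaxdeg : (∀ v, ((G.induce K.supp).neighborSet v).ncard ≤ 3) ∧
      ∃ v, ((G.induce K.supp).neighborSet v).ncard = 3)
    (hcard : 5 ≤ Nat.card K.supp)
    (hodd : Odd {v : K.supp | ((G.induce K.supp).neighborSet v).ncard = 2}.ncard)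
    (v u w s b : K.supp)
    (hv2 : ((G.induce K.supp).neighborSet v).ncard = 2)
    (hvu : (G.induce K.supp).Adj v u) (hvw : (G.induce K.supp).Adj v w) (huw : u ≠ w)
    (hus : (G.induce K.supp).Adj u s) (hsv : s ≠ v) (hsw : s ≠ w)
    (hwb : (G.induce K.supp).Adj w b) (hbu : b ≠ u) (hbv : b ≠ v) :
    ¬ (G.induce K.supp).Adj s b := by
    -- trivial case s = b
  rcases eq_or_ne s b with rfl | hsb
  · exact (G.induce K.supp).irrefl
  intro hsbH
  -- adjacency in the induced graph is adjacency in G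
  have hadjI : ∀ a c : K.supp, (G.induce K.supp).Adj a c ↔ G.Adj ↑a ↑c := by
    intro a c; rfl
  -- membership in K.supp from non-bridge adjacency
  have inK : ∀ (a : K.supp) (c : V), G.Adj ↑a c → ¬ G.IsBridge s(↑a, c) → c ∈ K.supp := by
    intro a c hadj hnb
    have : (G.deleteEdges {e | G.IsBridge e}).Adj ↑a c := by
      rw [deleteEdges_adj]; exact ⟨hadj, hnb⟩
    have h1 : (G.deleteEdges {e | G.IsBridge e}).connectedComponentMk c
        = (G.deleteEdges {e | G.IsBridge e}).connectedComponentMk ↑a :=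
      ConnectedComponent.eq.mpr this.symm.reachable
    rw [ConnectedComponent.mem_supp_iff, h1, ← ConnectedComponent.mem_supp_iff]
    exact a.2
  have bridgeOut : ∀ (a : K.supp) (c : V), c ∉ K.supp → G.Adj ↑a c → G.IsBridge s(↑a, c) := by
    intro a c hc hadj
    by_contra hnb
    exact hc (inK a c hadj hnb)
  -- coerced adjacencies and distinctness
  have hvu' : G.Adj ↑v ↑u := hvu
  have hvw' : G.Adj ↑v ↑w := hvw
  have hus' : G.Adj ↑u ↑s := hus
  have hwb' : G.Adj ↑w ↑b := hwb
  have hsb' : G.Adj ↑s ↑b := hsbH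
  have cne : ∀ {a c : K.supp}, a ≠ c → (↑a : V) ≠ ↑c :=
    fun h => Subtype.coe_injective.ne_iff.mpr h
  -- the H-neighborhood of v is exactly {u, w}
  have hNv : (G.induce K.supp).neighborSet v = {u, w} := by
    refine (Set.eq_of_subset_of_ncard_le ?_ ?_ (Set.toFinite _)).symm
    · intro c hmem
      rcases hmem with rfl | rfl
      · exact hvu
      · exact hvw
    · rw [hv2, Set.ncard_pair huw]
  -- the third G-neighbor x of v, lying outside K.supp
  obtain ⟨x, hvx, hxu, hxw⟩ := cubic_third hcubic hvu' hvw' (cne huw)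
  have hxK : x ∉ K.supp := by
    intro hx
    have : (⟨x, hx⟩ : K.supp) ∈ (G.induce K.supp).neighborSet v := hvx
    rw [hNv] at this
    rcases this with h | h
    · exact hxu (congrArg Subtype.val h)
    · exact hxw (congrArg Subtype.val h)
  have hNvG : G.neighborSet ↑v = {↑u, ↑w, x} :=
    cubic_nbhd_eq hcubic hvu' hvw' hvx (cne huw) (Ne.symm hxu) (Ne.symm hxw)
  have hbrvx : G.IsBridge s(↑v, x) := bridgeOut v x hxK hvx
  -- x is not adjacent to u or w (else the bridge vx lies in a cycle)
  have hnxu : ¬ G.Adj ↑u x := fun h =>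
    not_isBridge_of_path2 hvu' h hvu'.ne' (fun he => hxK (he ▸ u.2)) hbrvx
  have hnxw : ¬ G.Adj ↑w x := fun h =>
    not_isBridge_of_path2 hvw' h hvw'.ne' (fun he => hxK (he ▸ w.2)) hbrvx
  -- claw-freeness at v forces u ~ w
  have huwadj : G.Adj ↑u ↑w := by
    by_contra hne
    exact hclaw ⟨↑v, ↑u, ↑w, x, hvu', hvw', hvx, cne huw, Ne.symm hxu, Ne.symm hxw,
      hne, hnxu, hnxw⟩
  -- full neighborhoods of u and w
  have hvne_w : (↑v : V) ≠ ↑w := hvw'.ne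
  have hvne_u : (↑v : V) ≠ ↑u := hvu'.ne
  have hNu : G.neighborSet ↑u = {↑v, ↑w, ↑s} :=
    cubic_nbhd_eq hcubic hvu'.symm huwadj hus' hvne_w (Ne.symm (cne hsv)) (Ne.symm (cne hsw))
  have hNw : G.neighborSet ↑w = {↑v, ↑u, ↑b} :=
    cubic_nbhd_eq hcubic hvw'.symm huwadj.symm hwb' hvne_u (Ne.symm (cne hbv)) (Ne.symm (cne hbu))
  have memNu : ∀ c : V, G.Adj ↑u c → c = ↑v ∨ c = ↑w ∨ c = ↑s := by
    intro c hadj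
    have : c ∈ G.neighborSet ↑u := hadj
    rw [hNu] at this
    simpa using this
  have memNw : ∀ c : V, G.Adj ↑w c → c = ↑v ∨ c = ↑u ∨ c = ↑b := by
    intro c hadj
    have : c ∈ G.neighborSet ↑w := hadj
    rw [hNw] at this
    simpa using this
  have memNv : ∀ c : V, G.Adj ↑v c → c = ↑u ∨ c = ↑w ∨ c = x := by
    intro c hadj
    have : c ∈ G.neighborSet ↑v := hadj
    rw [hNvG] at this
    simpa using this
  -- u is not adjacent to b, w is not adjacent to s
  have hnub : ¬ G.Adj ↑u ↑b := by
    intro h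
    rcases memNu _ h with h' | h' | h'
    · exact cne hbv h'
    · exact hwb'.ne h'.symm
    · exact cne hsb h'.symm
  have hnws : ¬ G.Adj ↑w ↑s := by
    intro h
    rcases memNw _ h with h' | h' | h'
    · exact cne hsv h'
    · exact hus'.ne h'.symm
    · exact cne hsb h'
  -- the third neighbor t of s
  obtain ⟨t, hst, htu, htb⟩ := cubic_third hcubic hus'.symm hsb' (cne hbu.symm)
  have htv : t ≠ ↑v := by
    rintro rfl
    rcases memNv _ hst.symm with h' | h' | h'
    · exact hus'.ne h'.symm
    · exact cne hsw h'
    · exact hxK (h' ▸ s.2)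
  have htw : t ≠ ↑w := fun h => hnws (h ▸ hst).symm
  -- claw-freeness at s forces t ~ b
  have htbadj : G.Adj ↑b t := by
    by_contra hnbt
    have hnut : ¬ G.Adj ↑u t := by
      intro h
      rcases memNu _ h with h' | h' | h'
      · exact htv h'
      · exact htw h'
      · exact hst.ne' h'
    exact hclaw ⟨↑s, ↑u, ↑b, t, hus'.symm, hsb', hst, cne hbu.symm, Ne.symm htu,
      Ne.symm htb, hnub, hnut, hnbt⟩
  -- full neighborhoods of s and b
  have hNs : G.neighborSet ↑s = {↑u, ↑b, t} :=
    cubic_nbhd_eq hcubic hus'.symm hsb' hst (cne hbu.symm) (Ne.symm htu) (Ne.symm htb)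
  have hNb : G.neighborSet ↑b = {↑w, ↑s, t} :=
    cubic_nbhd_eq hcubic hwb'.symm hsb'.symm htbadj (Ne.symm (cne hsw)) (Ne.symm htw) hst.ne
  have memNs : ∀ c : V, G.Adj ↑s c → c = ↑u ∨ c = ↑b ∨ c = t := by
    intro c hadj
    have : c ∈ G.neighborSet ↑s := hadj
    rw [hNs] at this
    simpa using this
  have memNb : ∀ c : V, G.Adj ↑b c → c = ↑w ∨ c = ↑s ∨ c = t := by
    intro c hadj
    have : c ∈ G.neighborSet ↑b := hadj
    rw [hNb] at this
    simpa using this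
  -- t lies in K.supp (the edge st is in the triangle s-t-b)
  have htK : t ∈ K.supp := by
    refine inK s t hst ?_
    exact not_isBridge_of_path2 hsb' htbadj (cne hsb).symm (Ne.symm htb)
  -- subtype inequality from value inequality
  have sne : ∀ {a c : K.supp}, (↑a : V) ≠ ↑c → a ≠ c := by
    intro a c h h'
    exact h (congrArg Subtype.val h')
  -- the third neighbor r of t
  obtain ⟨r, htr, hrs, hrb⟩ := cubic_third hcubic hst.symm htbadj.symm (cne hsb)
  have hNt : G.neighborSet t = {↑s, ↑b, r} :=
    cubic_nbhd_eq hcubic hst.symm htbadj.symm htr (cne hsb) (Ne.symm hrs) (Ne.symm hrb)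
  have memNt : ∀ c : V, G.Adj t c → c = ↑s ∨ c = ↑b ∨ c = r := by
    intro c hadj
    have : c ∈ G.neighborSet t := hadj
    rw [hNt] at this
    simpa using this
  have hrv : r ≠ ↑v := by
    rintro rfl
    rcases memNv _ htr.symm with h' | h' | h'
    · exact htu h'
    · exact htw h'
    · exact hxK (h' ▸ htK)
  have hru : r ≠ ↑u := by
    rintro rfl
    rcases memNu _ htr.symm with h' | h' | h'
    · exact htv h'
    · exact htw h'
    · exact hst.ne' h'
  have hrw : r ≠ ↑w := by
    rintro rfl
    rcases memNw _ htr.symm with h' | h' | h'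
    · exact htv h'
    · exact htu h'
    · exact htb h'
  by_cases hbr : G.IsBridge s(t, r)
  · -- Case A : t r is a bridge of G; then K.supp = {v,u,w,s,b,t} and exactly
    -- v and t have degree two, contradicting oddness.
    have hrK : r ∉ K.supp := by
      intro hr
      have hreach : (G.deleteEdges {e | G.IsBridge e}).Reachable t r :=
        ConnectedComponent.exact (((ConnectedComponent.mem_supp_iff _ _).mp htK).trans
          ((ConnectedComponent.mem_supp_iff _ _).mp hr).symm)
      have hle : G.deleteEdges {e | G.IsBridge e} ≤ G \ fromEdgeSet {s(t, r)} := by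
        intro a c hac
        rw [deleteEdges_adj] at hac
        rw [sdiff_adj, fromEdgeSet_adj]
        refine ⟨hac.1, fun hcon => hac.2 ?_⟩
        rw [Set.mem_singleton_iff] at hcon
        exact hcon.1 ▸ hbr
      exact (isBridge_iff.mp hbr) (hreach.mono hle)
    -- every vertex of K.supp is one of v, u, w, s, b, t
    have hclosed : ∀ z : K.supp, (↑z : V) = ↑v ∨ (↑z : V) = ↑u ∨ (↑z : V) = ↑w ∨
        (↑z : V) = ↑s ∨ (↑z : V) = ↑b ∨ (↑z : V) = t := by
      intro z
      by_contra hz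
      push_neg at hz
      obtain ⟨hz1, hz2, hz3, hz4, hz5, hz6⟩ := hz
      have hreach : (G.deleteEdges {e | G.IsBridge e}).Reachable ↑v ↑z :=
        ConnectedComponent.exact (((ConnectedComponent.mem_supp_iff _ _).mp v.2).trans
          ((ConnectedComponent.mem_supp_iff _ _).mp z.2).symm)
      obtain ⟨p⟩ := hreach
      obtain ⟨d, -, hdf, hds⟩ := p.exists_boundary_dart ({↑v, ↑u, ↑w, ↑s, ↑b, t} : Set V)
        (by simp) (by simp [hz1, hz2, hz3, hz4, hz5, hz6])
      have hadj := d.adj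
      rw [deleteEdges_adj] at hadj
      obtain ⟨hGadj, hnbr⟩ := hadj
      simp only [Set.mem_insert_iff, Set.mem_singleton_iff, not_or] at hds
      obtain ⟨hd1, hd2, hd3, hd4, hd5, hd6⟩ := hds
      simp only [Set.mem_insert_iff, Set.mem_singleton_iff] at hdf
      rcases hdf with h | h | h | h | h | h <;> rw [h] at hGadj hnbr
      · rcases memNv _ hGadj with h' | h' | h'
        · exact hd2 h'
        · exact hd3 h'
        · rw [h'] at hnbr; exact hnbr hbrvx
      · rcases memNu _ hGadj with h' | h' | h'
        · exact hd1 h'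
        · exact hd3 h'
        · exact hd4 h'
      · rcases memNw _ hGadj with h' | h' | h'
        · exact hd1 h'
        · exact hd2 h'
        · exact hd5 h'
      · rcases memNs _ hGadj with h' | h' | h'
        · exact hd2 h'
        · exact hd5 h'
        · exact hd6 h'
      · rcases memNb _ hGadj with h' | h' | h'
        · exact hd3 h'
        · exact hd4 h'
        · exact hd6 h'
      · rcases memNt _ hGadj with h' | h' | h'
        · exact hd4 h'
        · exact hd5 h'
        · rw [h'] at hnbr; exact hnbr hbr
    have hall : ∀ z : K.supp, z = v ∨ z = u ∨ z = w ∨ z = s ∨ z = b ∨ z = ⟨t, htK⟩ := by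
      intro z
      rcases hclosed z with h | h | h | h | h | h
      · exact Or.inl (Subtype.ext h)
      · exact Or.inr (Or.inl (Subtype.ext h))
      · exact Or.inr (Or.inr (Or.inl (Subtype.ext h)))
      · exact Or.inr (Or.inr (Or.inr (Or.inl (Subtype.ext h))))
      · exact Or.inr (Or.inr (Or.inr (Or.inr (Or.inl (Subtype.ext h)))))
      · exact Or.inr (Or.inr (Or.inr (Or.inr (Or.inr (Subtype.ext h)))))
    -- induced neighborhoods and degrees
    have hNHu : (G.induce K.supp).neighborSet u = {v, w, s} := by
      ext c
      simp only [mem_neighborSet, Set.mem_insert_iff, Set.mem_singleton_iff]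
      constructor
      · intro h
        rcases memNu _ h with h' | h' | h'
        · exact Or.inl (Subtype.ext h')
        · exact Or.inr (Or.inl (Subtype.ext h'))
        · exact Or.inr (Or.inr (Subtype.ext h'))
      · rintro (rfl | rfl | rfl)
        · exact hvu.symm
        · exact huwadj
        · exact hus
    have hNHw : (G.induce K.supp).neighborSet w = {v, u, b} := by
      ext c
      simp only [mem_neighborSet, Set.mem_insert_iff, Set.mem_singleton_iff]
      constructor
      · intro h
        rcases memNw _ h with h' | h' | h'
        · exact Or.inl (Subtype.ext h')
        · exact Or.inr (Or.inl (Subtype.ext h'))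
        · exact Or.inr (Or.inr (Subtype.ext h'))
      · rintro (rfl | rfl | rfl)
        · exact hvw.symm
        · exact huwadj.symm
        · exact hwb
    have hNHs : (G.induce K.supp).neighborSet s = {u, b, ⟨t, htK⟩} := by
      ext c
      simp only [mem_neighborSet, Set.mem_insert_iff, Set.mem_singleton_iff]
      constructor
      · intro h
        rcases memNs _ h with h' | h' | h'
        · exact Or.inl (Subtype.ext h')
        · exact Or.inr (Or.inl (Subtype.ext h'))
        · exact Or.inr (Or.inr (Subtype.ext h'))
      · rintro (rfl | rfl | rfl)
        · exact hus.symm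
        · exact hsbH
        · exact hst
    have hNHb : (G.induce K.supp).neighborSet b = {w, s, ⟨t, htK⟩} := by
      ext c
      simp only [mem_neighborSet, Set.mem_insert_iff, Set.mem_singleton_iff]
      constructor
      · intro h
        rcases memNb _ h with h' | h' | h'
        · exact Or.inl (Subtype.ext h')
        · exact Or.inr (Or.inl (Subtype.ext h'))
        · exact Or.inr (Or.inr (Subtype.ext h'))
      · rintro (rfl | rfl | rfl)
        · exact hwb.symm
        · exact hsbH.symm
        · exact htbadj
    have hNHt : (G.induce K.supp).neighborSet ⟨t, htK⟩ = {s, b} := by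
      ext c
      simp only [mem_neighborSet, Set.mem_insert_iff, Set.mem_singleton_iff]
      constructor
      · intro h
        rcases memNt _ h with h' | h' | h'
        · exact Or.inl (Subtype.ext h')
        · exact Or.inr (Subtype.ext h')
        · exact absurd (h' ▸ c.2) hrK
      · rintro (rfl | rfl)
        · exact hst.symm
        · exact htbadj.symm
    have hdu : ((G.induce K.supp).neighborSet u).ncard = 3 := by
      rw [hNHu]
      exact Set.ncard_eq_three.mpr ⟨v, w, s, sne hvne_w, hsv.symm, hsw.symm, rfl⟩
    have hdw : ((G.induce K.supp).neighborSet w).ncard = 3 := by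
      rw [hNHw]
      exact Set.ncard_eq_three.mpr ⟨v, u, b, sne hvne_u, hbv.symm, hbu.symm, rfl⟩
    have hds : ((G.induce K.supp).neighborSet s).ncard = 3 := by
      rw [hNHs]
      exact Set.ncard_eq_three.mpr ⟨u, b, ⟨t, htK⟩, hbu.symm, sne htu.symm,
        sne htb.symm, rfl⟩
    have hdb : ((G.induce K.supp).neighborSet b).ncard = 3 := by
      rw [hNHb]
      exact Set.ncard_eq_three.mpr ⟨w, s, ⟨t, htK⟩, hsw.symm, sne htw.symm,
        sne hst.ne, rfl⟩
    have hdT : ((G.induce K.supp).neighborSet ⟨t, htK⟩).ncard = 2 := by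
      rw [hNHt]
      exact Set.ncard_pair hsb
    have hSeq : {z : K.supp | ((G.induce K.supp).neighborSet z).ncard = 2}
        = {v, ⟨t, htK⟩} := by
      ext z
      simp only [Set.mem_setOf_eq, Set.mem_insert_iff, Set.mem_singleton_iff]
      constructor
      · intro hz
        rcases hall z with rfl | rfl | rfl | rfl | rfl | rfl
        · exact Or.inl rfl
        · rw [hdu] at hz; omega
        · rw [hdw] at hz; omega
        · rw [hds] at hz; omega
        · rw [hdb] at hz; omega
        · exact Or.inr rfl
      · rintro (rfl | rfl)
        · exact hv2
        · exact hdT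
    rw [hSeq, Set.ncard_pair (sne htv.symm)] at hodd
    exact absurd hodd (by decide)
  · -- Case B : t r is not a bridge of G, hence r ∈ K.supp and t r is a bridge
    -- of the induced graph, contradicting 2-edge-connectivity.
    have hrK : r ∈ K.supp := inK ⟨t, htK⟩ r htr hbr
    refine absurd ?_ (h2ec.2.2 s((⟨t, htK⟩ : K.supp), (⟨r, hrK⟩ : K.supp)))
    rw [isBridge_iff]
    rintro ⟨p⟩
    set X : Set K.supp := {v, u, w, s, b, ⟨t, htK⟩} with hX
    have hRX : (⟨r, hrK⟩ : K.supp) ∉ X := by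
      rw [hX]
      simp only [Set.mem_insert_iff, Set.mem_singleton_iff, not_or]
      exact ⟨sne hrv, sne hru, sne hrw, sne hrs, sne hrb, sne htr.ne'⟩
    have hTX : (⟨t, htK⟩ : K.supp) ∈ X := by
      rw [hX]
      exact Or.inr (Or.inr (Or.inr (Or.inr (Or.inr rfl))))
    obtain ⟨d, -, hdf, hds⟩ := p.exists_boundary_dart X hTX hRX
    rw [hX] at hdf hds
    have hadj : ((G.induce K.supp) \ fromEdgeSet {s((⟨t, htK⟩ : K.supp), (⟨r, hrK⟩ : K.supp))}).Adj d.fst d.snd := d.adj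
    rw [sdiff_adj] at hadj
    obtain ⟨hHadj, hnbr⟩ := hadj
    rw [fromEdgeSet_adj, Set.mem_singleton_iff] at hnbr
    push_neg at hnbr
    have hGadj : G.Adj ↑d.fst ↑d.snd := hHadj
    simp only [Set.mem_insert_iff, Set.mem_singleton_iff, not_or] at hds
    obtain ⟨hd1, hd2, hd3, hd4, hd5, hd6⟩ := hds
    simp only [Set.mem_insert_iff, Set.mem_singleton_iff] at hdf
    rcases hdf with h | h | h | h | h | h <;> rw [h] at hGadj hnbr
    · rcases memNv _ hGadj with h' | h' | h'
      · exact hd2 (Subtype.ext h')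
      · exact hd3 (Subtype.ext h')
      · exact hxK (h' ▸ d.snd.2)
    · rcases memNu _ hGadj with h' | h' | h'
      · exact hd1 (Subtype.ext h')
      · exact hd3 (Subtype.ext h')
      · exact hd4 (Subtype.ext h')
    · rcases memNw _ hGadj with h' | h' | h'
      · exact hd1 (Subtype.ext h')
      · exact hd2 (Subtype.ext h')
      · exact hd5 (Subtype.ext h')
    · rcases memNs _ hGadj with h' | h' | h'
      · exact hd2 (Subtype.ext h')
      · exact hd5 (Subtype.ext h')
      · exact hd6 (Subtype.ext h')
    · rcases memNb _ hGadj with h' | h' | h'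
      · exact hd3 (Subtype.ext h')
      · exact hd4 (Subtype.ext h')
      · exact hd6 (Subtype.ext h')
    · rcases memNt _ hGadj with h' | h' | h'
      · exact hd4 (Subtype.ext h')
      · exact hd5 (Subtype.ext h')
      · have heq : d.snd = (⟨r, hrK⟩ : K.supp) := Subtype.ext h'
        have h2 := hnbr (by rw [heq])
        exact hGadj.ne (congrArg Subtype.val h2)
end
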